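/- arXiv:1411.7208 — 11 statements merged into one kernel-verified Lean document; each statement's English description precedes it below -/
import Mathlib

section
/- For every finite simple graph G with signed Roman domination number 0, the join G ∨ K₁ (G plus one universal vertex) has signed Roman domination number exactly 1. -/
open Finset SimpleGraph
open scoped Classical

/-- The sum of `f` over the closed neighborhood of `v` in `G`. -/
noncomputable def closedNbrSum {V : Type*} [Fintype V] (G : SimpleGraph V)
    (f : V → ℤ) (v : V) : ℤ :=
  ∑ u ∈ Finset.univ.filter (fun u => u = v ∨ G.Adj v u), f u

/-- `f` is a signed Roman dominating function on `G`. -/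
def IsSRDF {V : Type*} [Fintype V] (G : SimpleGraph V) (f : V → ℤ) : Prop :=
  (∀ v, f v = -1 ∨ f v = 1 ∨ f v = 2) ∧
  (∀ v, 1 ≤ closedNbrSum G f v) ∧
  (∀ v, f v = -1 → ∃ u, G.Adj v u ∧ f u = 2)

/-- The signed Roman domination number of `G`. -/
noncomputable def gammaSR {V : Type*} [Fintype V] (G : SimpleGraph V) : ℤ :=
  sInf {w : ℤ | ∃ f, IsSRDF G f ∧ w = ∑ v, f v}

/-- The join of two graphs. -/
def graphJoin {V W : Type*} (G : SimpleGraph V) (H : SimpleGraph W) :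
    SimpleGraph (V ⊕ W) where
  Adj x y :=
    match x, y with
    | .inl a, .inl b => G.Adj a b
    | .inr a, .inr b => H.Adj a b
    | _, _ => True
  symm := by
    constructor
    rintro (a | a) (b | b) h <;> simp_all <;> exact h.symm
  loopless := by
    constructor
    rintro (a | a) h <;> simp_all

lemma srdf_lb {V : Type*} [Fintype V] (G : SimpleGraph V) (f : V → ℤ)
    (hf : IsSRDF G f) : -(Fintype.card V : ℤ) ≤ ∑ v, f v := by
  have h1 : ∀ v, -1 ≤ f v := fun v => by rcases hf.1 v with h|h|h <;> omega
  calc -(Fintype.card V : ℤ) = ∑ _v : V, (-1 : ℤ) := by simp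
    _ ≤ ∑ v, f v := Finset.sum_le_sum fun v _ => h1 v

lemma srdf_two {V : Type*} [Fintype V] (G : SimpleGraph V) :
    IsSRDF G (fun _ => 2) := by
  refine ⟨fun v => by simp, fun v => ?_, fun v hv => by simp at hv⟩
  have hv : v ∈ Finset.univ.filter (fun u => u = v ∨ G.Adj v u) := by simp
  unfold closedNbrSum
  calc (1 : ℤ) ≤ 2 := by norm_num
    _ ≤ ∑ u ∈ Finset.univ.filter (fun u => u = v ∨ G.Adj v u), (2 : ℤ) :=
      Finset.single_le_sum (f := fun _ => (2:ℤ)) (fun i _ => by norm_num) hv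
    _ = _ := rfl

lemma srdf_set_props {V : Type*} [Fintype V] (G : SimpleGraph V) :
    ({w : ℤ | ∃ f, IsSRDF G f ∧ w = ∑ v, f v}).Nonempty ∧
    BddBelow {w : ℤ | ∃ f, IsSRDF G f ∧ w = ∑ v, f v} := by
  constructor
  · exact ⟨∑ _v : V, (2:ℤ), fun _ => 2, srdf_two G, rfl⟩
  · refine ⟨-(Fintype.card V : ℤ), ?_⟩
    rintro w ⟨f, hf, rfl⟩
    exact srdf_lb G f hf

theorem stmt1 {V : Type*} [Fintype V] (G : SimpleGraph V)
    (h : gammaSR G = 0) :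
    gammaSR (graphJoin G (⊥ : SimpleGraph (Fin 1))) = 1 := by
  classical
  set J := graphJoin G (⊥ : SimpleGraph (Fin 1)) with hJ
  -- key: closed nbhd of inr 0 in J is everything
  have hfilt : (Finset.univ.filter
      (fun u : V ⊕ Fin 1 => u = Sum.inr 0 ∨ J.Adj (Sum.inr 0) u)) = Finset.univ := by
    ext u
    simp only [Finset.mem_filter, Finset.mem_univ, true_and, iff_true]
    rcases u with a | b
    · right; simp [hJ, graphJoin]
    · left; congr; exact Subsingleton.elim b 0
  have key : ∀ g : (V ⊕ Fin 1) → ℤ,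
      closedNbrSum J g (Sum.inr 0) = ∑ u, g u := by
    intro g; unfold closedNbrSum
    apply Finset.sum_congr _ (fun _ _ => rfl)
    ext u
    simp only [Finset.mem_filter, Finset.mem_univ, true_and, iff_true]
    rcases u with a | b
    · right; simp [hJ, graphJoin]
    · left; congr; exact Subsingleton.elim b 0
  -- get a weight-0 SRDF on G
  obtain ⟨hne, hbdd⟩ := srdf_set_props G
  have hmem : (0 : ℤ) ∈ {w : ℤ | ∃ f, IsSRDF G f ∧ w = ∑ v, f v} := by
    rw [← h]; exact Int.csInf_mem hne hbdd
  obtain ⟨f, hf, hf0⟩ := hmem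
  -- extend to J
  set g : (V ⊕ Fin 1) → ℤ := Sum.elim f (fun _ => 1) with hg
  have hsum : ∑ u, g u = 1 := by
    rw [Fintype.sum_sum_type]; simp [hg, ← hf0]
  have hgS : IsSRDF J g := by
    refine ⟨?_, ?_, ?_⟩
    · rintro (a | b)
      · exact hf.1 a
      · right; left; rfl
    · rintro (a | b)
      · -- closed nbhd sum at inl a = closedNbrSum G f a + 1
        have : closedNbrSum J g (Sum.inl a) = closedNbrSum G f a + 1 := by
          unfold closedNbrSum
          rw [Finset.sum_filter, Finset.sum_filter, Fintype.sum_sum_type]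
          simp [hg, hJ, graphJoin]
        rw [this]
        have := hf.2.1 a
        omega
      · rw [show (b : Fin 1) = 0 from Subsingleton.elim b 0, key g, hsum]
    · rintro (a | b) hv
      · obtain ⟨u, hu, hu2⟩ := hf.2.2 a hv
        exact ⟨Sum.inl u, by simpa [hJ, graphJoin] using hu, hu2⟩
      · simp [hg] at hv
  -- conclude
  have hmem1 : (1 : ℤ) ∈ {w : ℤ | ∃ f, IsSRDF J f ∧ w = ∑ v, f v} :=
    ⟨g, hgS, hsum.symm⟩
  obtain ⟨hne', hbdd'⟩ := srdf_set_props J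
  apply le_antisymm
  · exact csInf_le hbdd' hmem1
  · apply le_csInf hne'
    rintro w ⟨g', hg', rfl⟩
    have := hg'.2.1 (Sum.inr 0)
    rwa [key g'] at this
end

section
/- If G and H are graphs with γ_sR(G) ≥ 0 and γ_sR(H) ≥ 0, then γ_sR(G ∨ H) ≤ γ_sR(G) + γ_sR(H). -/
open Finset SimpleGraph
open scoped Classical

lemma srdf_set_nonempty {V : Type*} [Fintype V] (G : SimpleGraph V) :
    {w : ℤ | ∃ f, IsSRDF G f ∧ w = ∑ v, f v}.Nonempty :=
  ⟨∑ v : V, (2:ℤ), fun _ => 2, srdf_two G, rfl⟩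

lemma srdf_set_bddBelow {V : Type*} [Fintype V] (G : SimpleGraph V) :
    BddBelow {w : ℤ | ∃ f, IsSRDF G f ∧ w = ∑ v, f v} := by
  refine ⟨-(Fintype.card V : ℤ), ?_⟩
  rintro w ⟨f, hf, rfl⟩
  have : ∀ v : V, (-1 : ℤ) ≤ f v := fun v => by rcases hf.1 v with h | h | h <;> omega
  calc -(Fintype.card V : ℤ) = ∑ _v : V, (-1 : ℤ) := by simp
    _ ≤ ∑ v, f v := Finset.sum_le_sum fun v _ => this v

lemma gammaSR_mem {V : Type*} [Fintype V] (G : SimpleGraph V) :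
    ∃ f, IsSRDF G f ∧ gammaSR G = ∑ v, f v :=
  Int.csInf_mem (srdf_set_nonempty G) (srdf_set_bddBelow G)

theorem stmt2 {V W : Type*} [Fintype V] [Fintype W]
    (G : SimpleGraph V) (H : SimpleGraph W)
    (hG : 0 ≤ gammaSR G) (hH : 0 ≤ gammaSR H) :
    gammaSR (graphJoin G H) ≤ gammaSR G + gammaSR H := by
  obtain ⟨f, hf, hfw⟩ := gammaSR_mem G
  obtain ⟨g, hg, hgw⟩ := gammaSR_mem H
  set F : V ⊕ W → ℤ := Sum.elim f g with hF
  have hl : ∀ v : V, closedNbrSum (graphJoin G H) F (Sum.inl v)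
      = closedNbrSum G f v + ∑ w, g w := by
    intro v
    unfold closedNbrSum
    rw [Finset.sum_filter, Finset.sum_filter, Fintype.sum_sum_type]
    simp [graphJoin, hF]
  have hr : ∀ w : W, closedNbrSum (graphJoin G H) F (Sum.inr w)
      = closedNbrSum H g w + ∑ v, f v := by
    intro w
    unfold closedNbrSum
    rw [Finset.sum_filter, Finset.sum_filter, Fintype.sum_sum_type]
    simp [graphJoin, hF, add_comm]
  have hFs : IsSRDF (graphJoin G H) F := by
    refine ⟨?_, ?_, ?_⟩
    · rintro (v | w)
      · exact hf.1 v
      · exact hg.1 w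
    · rintro (v | w)
      · rw [hl v]
        have h1 := hf.2.1 v
        have h2 : 0 ≤ ∑ w, g w := hgw ▸ hH
        linarith
      · rw [hr w]
        have h1 := hg.2.1 w
        have h2 : 0 ≤ ∑ v, f v := hfw ▸ hG
        linarith
    · rintro (v | w) h
      · obtain ⟨u, hu, hu2⟩ := hf.2.2 v h
        exact ⟨Sum.inl u, by simpa [graphJoin] using hu, hu2⟩
      · obtain ⟨u, hu, hu2⟩ := hg.2.2 w h
        exact ⟨Sum.inr u, by simpa [graphJoin] using hu, hu2⟩
  have hsum : ∑ x, F x = gammaSR G + gammaSR H := by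
    rw [Fintype.sum_sum_type]
    simp [hF, hfw, hgw]
  calc gammaSR (graphJoin G H) ≤ ∑ x, F x :=
        csInf_le (srdf_set_bddBelow _) ⟨F, hFs, rfl⟩
    _ = _ := by rw [hsum]
end

section
/- If n is a positive multiple of 3 with n ≥ 3, then the signed Roman domination number of the join C₃ ∨ Cₙ equals 1. -/
open Finset SimpleGraph
open scoped Classical

-- ===== auxiliary lemmas =====
lemma aux_pattern_sum (k : ℕ) :
    ∑ i ∈ Finset.range (3*k), (if i % 3 = 0 then (2:ℤ) else -1) = 0 := by
  induction k with
  | zero => simp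
  | succ m ih =>
    have h3 : 3 * (m+1) = 3*m + 1 + 1 + 1 := by ring
    rw [h3, Finset.sum_range_succ, Finset.sum_range_succ, Finset.sum_range_succ, ih]
    have e0 : (3*m) % 3 = 0 := by omega
    have e1 : (3*m+1) % 3 = 1 := by omega
    have e2 : (3*m+1+1) % 3 = 2 := by omega
    rw [e0, e1, e2]; norm_num

lemma aux_val_add_one (m : ℕ) (b : Fin (m+2)) : (b + 1).val = (b.val + 1) % (m+2) := by
  rw [Fin.add_def]; norm_num

lemma aux_val_sub_one (m : ℕ) (b : Fin (m+2)) : (b - 1).val = (b.val + (m+1)) % (m+2) := by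
  rw [Fin.sub_def]; norm_num; congr 1; omega

lemma aux_mod3_add (m : ℕ) (hd : 3 ∣ (m+2)) (b : Fin (m+2)) :
    (b + 1).val % 3 = (b.val + 1) % 3 := by
  rw [aux_val_add_one, Nat.mod_mod_of_dvd _ hd]

lemma aux_mod3_sub (m : ℕ) (hd : 3 ∣ (m+2)) (b : Fin (m+2)) :
    (b - 1).val % 3 = (b.val + 2) % 3 := by
  rw [aux_val_sub_one, Nat.mod_mod_of_dvd _ hd]; omega

lemma closedNbrSum_eq_sum_finset {V : Type*} [Fintype V] (G : SimpleGraph V)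
    (f : V → ℤ) (v : V) (s : Finset V) (h : ∀ u, (u = v ∨ G.Adj v u) ↔ u ∈ s) :
    closedNbrSum G f v = ∑ u ∈ s, f u := by
  unfold closedNbrSum
  congr 1
  ext u
  simp only [Finset.mem_filter, Finset.mem_univ, true_and]
  exact h u

theorem stmt3 (n : ℕ) (hn : 3 ≤ n) (hd : 3 ∣ n) :
    gammaSR (graphJoin (cycleGraph 3) (cycleGraph n)) = 1 := by
  obtain ⟨m, rfl⟩ : ∃ m, n = m + 2 := ⟨n - 2, by omega⟩
  set G := graphJoin (cycleGraph 3) (cycleGraph (m+2)) with hG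
  -- closed nbhd of a C3 vertex is everything
  have hfull : ∀ (f : Fin 3 ⊕ Fin (m+2) → ℤ) (a : Fin 3),
      closedNbrSum G f (Sum.inl a) = ∑ v, f v := by
    intro f a
    apply closedNbrSum_eq_sum_finset
    rintro (c | b)
    · refine iff_of_true ?_ (Finset.mem_univ _)
      by_cases hc : c = a
      · exact Or.inl (by rw [hc])
      · right
        show (cycleGraph 3).Adj a c
        rw [cycleGraph_three_eq_top]
        exact fun h => hc h.symm
    · exact iff_of_true (Or.inr trivial) (Finset.mem_univ _)
  -- lower bound
  have lower : ∀ f : Fin 3 ⊕ Fin (m+2) → ℤ, IsSRDF G f → 1 ≤ ∑ v, f v := by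
    intro f ⟨_, h2, _⟩
    have := h2 (Sum.inl 0)
    rwa [hfull f 0] at this
  -- explicit SRDF
  set f : Fin 3 ⊕ Fin (m+2) → ℤ := fun x =>
    match x with
    | .inl a => if a.val = 2 then -1 else 1
    | .inr b => if b.val % 3 = 0 then 2 else -1 with hf
  obtain ⟨k, hk⟩ := hd
  have hsum : ∑ v, f v = 1 := by
    rw [Fintype.sum_sum_type]
    have h1 : ∑ a : Fin 3, f (Sum.inl a) = 1 := by
      rw [Fin.sum_univ_three]; simp [hf]
    have h2 : ∑ b : Fin (m+2), f (Sum.inr b) = 0 := by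
      have e : ∑ b : Fin (m+2), f (Sum.inr b)
          = ∑ b : Fin (m+2), (fun i : ℕ => if i % 3 = 0 then (2:ℤ) else -1) b.val := rfl
      rw [e, Fin.sum_univ_eq_sum_range (fun i : ℕ => if i % 3 = 0 then (2:ℤ) else -1), hk,
        aux_pattern_sum]
    rw [h1, h2]; norm_num
  have hd3 : 3 ∣ (m+2) := ⟨k, hk⟩
  have hSRDF : IsSRDF G f := by
    refine ⟨?_, ?_, ?_⟩
    · rintro (a | b) <;> simp only [hf] <;> split <;> simp
    · rintro (a | b)
      · rw [hfull f a, hsum]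
      · -- Cn vertex
        have m1 := aux_mod3_sub m hd3 b
        have m2 := aux_mod3_add m hd3 b
        have d1 : b - 1 ≠ b := by intro h; rw [h] at m1; omega
        have d2 : b + 1 ≠ b := by intro h; rw [h] at m2; omega
        have d3 : b - 1 ≠ b + 1 := by intro h; rw [h] at m1; omega
        have hnb : closedNbrSum G f (Sum.inr b)
            = ∑ u ∈ ({Sum.inl 0, Sum.inl 1, Sum.inl 2,
                Sum.inr b, Sum.inr (b-1), Sum.inr (b+1)} :
                Finset (Fin 3 ⊕ Fin (m+2))), f u := by
          apply closedNbrSum_eq_sum_finset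
          rintro (c | c)
          · simp only [Finset.mem_insert, Finset.mem_singleton]
            refine iff_of_true (Or.inr trivial) ?_
            fin_cases c <;> simp
          · simp only [Finset.mem_insert, Finset.mem_singleton, Sum.inr.injEq, reduceCtorEq,
              false_or]
            have hadj : G.Adj (Sum.inr b) (Sum.inr c) ↔ (b - c = 1 ∨ c - b = 1) := by
              show (cycleGraph (m+2)).Adj b c ↔ _
              exact cycleGraph_adj
            rw [hadj]
            have e1 : b - c = 1 ↔ c = b - 1 := by
              constructor <;> intro h
              · rw [← h]; abel
              · rw [h]; abel
            have e2 : c - b = 1 ↔ c = b + 1 := by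
              constructor <;> intro h
              · rw [show c = b + (c - b) by abel, h]
              · rw [h]; abel
            rw [e1, e2]
        rw [hnb]
        rw [Finset.sum_insert (by simp [Fin.ext_iff]),
          Finset.sum_insert (by simp [Fin.ext_iff]),
          Finset.sum_insert (by simp [Fin.ext_iff]),
          Finset.sum_insert (by simp [d1.symm, d2.symm]),
          Finset.sum_insert (by simp [d3]),
          Finset.sum_singleton]
        simp only [hf]
        norm_num
        rw [m1, m2]
        have hb : b.val % 3 = 0 ∨ b.val % 3 = 1 ∨ b.val % 3 = 2 := by omega
        split_ifs <;> omega
    · rintro (a | b) hneg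
      · refine ⟨Sum.inr ⟨0, by omega⟩, trivial, ?_⟩
        simp [hf]
      · simp only [hf] at hneg
        have hb : b.val % 3 ≠ 0 := by by_contra h; simp [h] at hneg
        by_cases h1 : b.val % 3 = 1
        · refine ⟨Sum.inr (b - 1), ?_, ?_⟩
          · show (cycleGraph (m+2)).Adj b (b - 1)
            exact cycleGraph_adj.mpr (Or.inl (by abel))
          · have := aux_mod3_sub m hd3 b
            simp only [hf]
            rw [if_pos (by omega)]
        · refine ⟨Sum.inr (b + 1), ?_, ?_⟩
          · show (cycleGraph (m+2)).Adj b (b + 1)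
            exact cycleGraph_adj.mpr (Or.inr (by abel))
          · have := aux_mod3_add m hd3 b
            simp only [hf]
            rw [if_pos (by omega)]
  have hmem : (1 : ℤ) ∈ {w : ℤ | ∃ g, IsSRDF G g ∧ w = ∑ v, g v} := ⟨f, hSRDF, hsum.symm⟩
  have hlb : ∀ w ∈ {w : ℤ | ∃ g, IsSRDF G g ∧ w = ∑ v, g v}, (1:ℤ) ≤ w := by
    rintro w ⟨g, hg, rfl⟩
    exact lower g hg
  rw [gammaSR]
  exact le_antisymm (csInf_le ⟨1, hlb⟩ hmem) (le_csInf ⟨1, hmem⟩ hlb)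
end

section
/- For all integers m ≥ 3 and n ≥ 3, the signed Roman domination number of Cₘ ∨ Cₙ satisfies 1 ≤ γ_sR(Cₘ ∨ Cₙ) ≤ 4. -/
open Finset SimpleGraph
open scoped Classical

/- ### Auxiliary lemmas -/

@[simp] lemma graphJoin_adj_ll {V W : Type*} (G : SimpleGraph V) (H : SimpleGraph W)
    (a b : V) : (graphJoin G H).Adj (.inl a) (.inl b) ↔ G.Adj a b := Iff.rfl

@[simp] lemma graphJoin_adj_rr {V W : Type*} (G : SimpleGraph V) (H : SimpleGraph W)
    (a b : W) : (graphJoin G H).Adj (.inr a) (.inr b) ↔ H.Adj a b := Iff.rfl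

@[simp] lemma graphJoin_adj_lr {V W : Type*} (G : SimpleGraph V) (H : SimpleGraph W)
    (a : V) (b : W) : (graphJoin G H).Adj (.inl a) (.inr b) := trivial

@[simp] lemma graphJoin_adj_rl {V W : Type*} (G : SimpleGraph V) (H : SimpleGraph W)
    (a : W) (b : V) : (graphJoin G H).Adj (.inr a) (.inl b) := trivial

lemma cns_join_inl {V W : Type*} [Fintype V] [Fintype W]
    (G : SimpleGraph V) (H : SimpleGraph W) (f : V ⊕ W → ℤ) (v : V) :
    closedNbrSum (graphJoin G H) f (.inl v)
      = closedNbrSum G (fun x => f (.inl x)) v + ∑ w : W, f (.inr w) := by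
  unfold closedNbrSum
  rw [Finset.sum_filter, Finset.sum_filter, Fintype.sum_sum_type]
  congr 1
  · apply Finset.sum_congr rfl
    intro x _
    simp [Sum.inl.injEq]
  · apply Finset.sum_congr rfl
    intro y _
    simp

lemma cns_join_inr {V W : Type*} [Fintype V] [Fintype W]
    (G : SimpleGraph V) (H : SimpleGraph W) (f : V ⊕ W → ℤ) (v : W) :
    closedNbrSum (graphJoin G H) f (.inr v)
      = closedNbrSum H (fun x => f (.inr x)) v + ∑ w : V, f (.inl w) := by
  unfold closedNbrSum
  rw [Finset.sum_filter, Finset.sum_filter, Fintype.sum_sum_type]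
  rw [add_comm]
  congr 1
  · apply Finset.sum_congr rfl
    intro y _
    simp
  · apply Finset.sum_congr rfl
    intro x _
    simp [Sum.inr.injEq]

lemma fin_succ_val (k : ℕ) (v : Fin (k+3)) :
    (v + 1).val = v.val + 1 ∨ (v.val = k + 2 ∧ (v + 1).val = 0) := by
  have h : (v + 1).val = (v.val + 1) % (k+3) := by rw [Fin.add_def]; simp
  rcases Nat.lt_or_ge (v.val + 1) (k+3) with hlt | hge
  · left; rw [h, Nat.mod_eq_of_lt hlt]
  · have hvlt := v.isLt
    have hv : v.val = k + 2 := by omega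
    right
    refine ⟨hv, ?_⟩
    have e : v.val + 1 = k + 3 := by omega
    rw [h, e, Nat.mod_self]

lemma fin_pred_val (k : ℕ) (v : Fin (k+3)) :
    (v - 1).val + 1 = v.val ∨ (v.val = 0 ∧ (v - 1).val = k + 2) := by
  have h : (v - 1).val = (k + 2 + v.val) % (k+3) := by rw [Fin.sub_def]; simp
  rcases Nat.eq_zero_or_pos v.val with h0 | h0
  · right
    refine ⟨h0, ?_⟩
    rw [h, h0, Nat.mod_eq_of_lt (by omega)]
  · have hvlt := v.isLt
    left
    rw [h, Nat.mod_eq_sub_mod (by omega), Nat.mod_eq_of_lt (by omega)]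
    omega

open Fin.CommRing in
lemma cns_cycle (k : ℕ) (f : Fin (k+3) → ℤ) (v : Fin (k+3)) :
    closedNbrSum (cycleGraph (k+3)) f v = f (v - 1) + f v + f (v + 1) := by
  have H1 := fin_pred_val k v
  have H2 := fin_succ_val k v
  have hvlt := v.isLt
  have h1 : v - 1 ≠ v := by
    intro h; have := congrArg Fin.val h; omega
  have h2 : v - 1 ≠ v + 1 := by
    intro h; have := congrArg Fin.val h; omega
  have h3 : v ≠ v + 1 := by
    intro h; have := congrArg Fin.val h; omega
  have hadj : ∀ u, (cycleGraph (k+3)).Adj v u ↔ v - u = 1 ∨ u - v = 1 :=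
    fun u => cycleGraph_adj
  unfold closedNbrSum
  trans ∑ u ∈ ({v - 1, v, v + 1} : Finset (Fin (k+3))), f u
  · apply Finset.sum_congr _ (fun _ _ => rfl)
    ext u
    simp only [Finset.mem_filter, Finset.mem_univ, true_and, Finset.mem_insert,
      Finset.mem_singleton, hadj]
    constructor
    · rintro (h | h | h)
      · exact Or.inr (Or.inl h)
      · exact Or.inl (by linear_combination -h)
      · exact Or.inr (Or.inr (by linear_combination h))
    · rintro (h | h | h)
      · exact Or.inr (Or.inl (by linear_combination -h))
      · exact Or.inl h
      · exact Or.inr (Or.inr (by linear_combination h))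
  · rw [Finset.sum_insert (by simp [h1, h2]), Finset.sum_insert (by simp [h3]),
      Finset.sum_singleton, add_assoc]

lemma sum_shift (k : ℕ) (g : Fin (k+3) → ℤ) (c : Fin (k+3)) :
    ∑ v, g (v + c) = ∑ v, g v :=
  Fintype.sum_equiv (Equiv.addRight c) _ _ (fun _ => rfl)

/-- The basic pattern function; it depends on `m` only through `m % 2`. -/
def qpat (m j : ℕ) : ℤ :=
  if j = 0 then 2 else if m % 2 = 0 ∧ j = 2 then 2 else if j % 2 = 1 then -1 else 1

lemma qpat_vals (m j : ℕ) : qpat m j = -1 ∨ qpat m j = 1 ∨ qpat m j = 2 := by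
  unfold qpat; split_ifs <;> simp

lemma qpat_zero (m : ℕ) : qpat m 0 = 2 := by simp [qpat]

lemma qpat_window (m a b c : ℕ) (hm : 3 ≤ m) (hb : b < m)
    (ha : a + 1 = b ∨ (b = 0 ∧ a = m - 1))
    (hc : c = b + 1 ∨ (b = m - 1 ∧ c = 0)) :
    -1 ≤ qpat m a + qpat m b + qpat m c := by
  unfold qpat
  split_ifs <;> omega

lemma qpat_congr (m m' j : ℕ) (h : m % 2 = m' % 2) : qpat m j = qpat m' j := by
  unfold qpat; rw [h]

lemma qpat_sum : ∀ m, 3 ≤ m → ∑ j ∈ Finset.range m, qpat m j = 2 := by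
  intro m
  induction m using Nat.strong_induction_on with
  | _ m ih =>
    intro hm
    by_cases hsmall : m < 5
    · interval_cases m <;> decide
    · obtain ⟨p, rfl⟩ : ∃ p, m = p + 2 := ⟨m - 2, by omega⟩
      have hp : 3 ≤ p := by omega
      rw [Finset.sum_range_succ, Finset.sum_range_succ]
      have key : ∑ j ∈ Finset.range p, qpat (p+2) j = 2 := by
        calc ∑ j ∈ Finset.range p, qpat (p+2) j
            = ∑ j ∈ Finset.range p, qpat p j :=
              Finset.sum_congr rfl (fun j _ => qpat_congr _ _ _ (by omega))
          _ = 2 := ih p (by omega) hp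
      rw [key]
      have ha : qpat (p+2) p + qpat (p+2) (p+1) = 0 := by
        unfold qpat; split_ifs <;> (try contradiction) <;> omega
      omega

/-- The SRDF witnessing the upper bound. -/
noncomputable def Fup (k l : ℕ) : Fin (k+3) ⊕ Fin (l+3) → ℤ :=
  Sum.elim (fun i => qpat (k+3) i.val) (fun i => qpat (l+3) i.val)

lemma fin_sum_qpat (k : ℕ) : ∑ i : Fin (k+3), qpat (k+3) i.val = 2 := by
  rw [Fin.sum_univ_eq_sum_range]
  exact qpat_sum (k+3) (by omega)

lemma cycle_window_qpat (k : ℕ) (v : Fin (k+3)) :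
    -1 ≤ qpat (k+3) (v-1).val + qpat (k+3) v.val + qpat (k+3) (v+1).val := by
  have H1 := fin_pred_val k v
  have H2 := fin_succ_val k v
  exact qpat_window (k+3) (v-1).val v.val (v+1).val (by omega) v.isLt
    (by omega) (by omega)

lemma Fup_isSRDF (k l : ℕ) :
    IsSRDF (graphJoin (cycleGraph (k+3)) (cycleGraph (l+3))) (Fup k l) := by
  refine ⟨?_, ?_, ?_⟩
  · rintro (a | a) <;> exact qpat_vals _ _
  · rintro (a | a)
    · rw [cns_join_inl, cns_cycle]
      have h1 : ∑ w : Fin (l+3), Fup k l (.inr w) = 2 := fin_sum_qpat l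
      have h2 := cycle_window_qpat k a
      simp only [Fup, Sum.elim_inl] at *
      omega
    · rw [cns_join_inr, cns_cycle]
      have h1 : ∑ w : Fin (k+3), Fup k l (.inl w) = 2 := fin_sum_qpat k
      have h2 := cycle_window_qpat l a
      simp only [Fup, Sum.elim_inr] at *
      omega
  · rintro (a | a) _
    · exact ⟨.inr 0, graphJoin_adj_lr _ _ _ _, by simp [Fup, qpat_zero]⟩
    · exact ⟨.inl 0, graphJoin_adj_rl _ _ _ _, by simp [Fup, qpat_zero]⟩

lemma Fup_sum (k l : ℕ) : ∑ v, Fup k l v = 4 := by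
  rw [Fintype.sum_sum_type]
  simp only [Fup, Sum.elim_inl, Sum.elim_inr]
  rw [fin_sum_qpat k, fin_sum_qpat l]
  norm_num

lemma srdf_weight_ge (k l : ℕ) (f : Fin (k+3) ⊕ Fin (l+3) → ℤ)
    (hf : IsSRDF (graphJoin (cycleGraph (k+3)) (cycleGraph (l+3))) f) :
    1 ≤ ∑ v, f v := by
  obtain ⟨-, h2, -⟩ := hf
  set A := ∑ v : Fin (k+3), f (.inl v) with hA
  set B := ∑ v : Fin (l+3), f (.inr v) with hB
  have hleft : ((k:ℤ)+3) ≤ 3 * A + ((k:ℤ)+3) * B := by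
    have hs : ∀ v : Fin (k+3), (1:ℤ) ≤
        (f (.inl (v - 1)) + f (.inl v) + f (.inl (v+1))) + B := by
      intro v
      have := h2 (.inl v)
      rwa [cns_join_inl, cns_cycle] at this
    have hsum := Finset.sum_le_sum (fun v (_ : v ∈ Finset.univ) => hs v)
    simp only [Finset.sum_add_distrib, Finset.sum_const, Finset.card_univ,
      Fintype.card_fin, nsmul_eq_mul] at hsum
    have e1 : ∑ v : Fin (k+3), f (.inl (v - 1)) = A := by
      rw [hA]
      have := sum_shift k (fun v => f (.inl v)) (-1)
      simp only [← sub_eq_add_neg] at this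
      exact this
    have e2 : ∑ v : Fin (k+3), f (.inl (v + 1)) = A := sum_shift k (fun v => f (.inl v)) 1
    rw [e1, e2] at hsum
    push_cast at hsum ⊢
    linarith
  have hright : ((l:ℤ)+3) ≤ 3 * B + ((l:ℤ)+3) * A := by
    have hs : ∀ v : Fin (l+3), (1:ℤ) ≤
        (f (.inr (v - 1)) + f (.inr v) + f (.inr (v+1))) + A := by
      intro v
      have := h2 (.inr v)
      rwa [cns_join_inr, cns_cycle] at this
    have hsum := Finset.sum_le_sum (fun v (_ : v ∈ Finset.univ) => hs v)
    simp only [Finset.sum_add_distrib, Finset.sum_const, Finset.card_univ,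
      Fintype.card_fin, nsmul_eq_mul] at hsum
    have e1 : ∑ v : Fin (l+3), f (.inr (v - 1)) = B := by
      rw [hB]
      have := sum_shift l (fun v => f (.inr v)) (-1)
      simp only [← sub_eq_add_neg] at this
      exact this
    have e2 : ∑ v : Fin (l+3), f (.inr (v + 1)) = B := sum_shift l (fun v => f (.inr v)) 1
    rw [e1, e2] at hsum
    push_cast at hsum ⊢
    linarith
  have htotal : ∑ v, f v = A + B := by
    rw [Fintype.sum_sum_type]
  rw [htotal]
  by_contra hcon
  push_neg at hcon
  have hk : (0:ℤ) ≤ (k:ℤ) := Int.natCast_nonneg k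
  have hl : (0:ℤ) ≤ (l:ℤ) := Int.natCast_nonneg l
  rcases le_or_gt B 0 with hb | hb
  · have key : (0:ℤ) ≤ (k:ℤ) * (1 - B) := mul_nonneg hk (by linarith)
    nlinarith
  · have ha : A ≤ -1 := by omega
    have key : (0:ℤ) ≤ (l:ℤ) * (1 - A) := mul_nonneg hl (by linarith)
    nlinarith

theorem stmt4 (m n : ℕ) (hm : 3 ≤ m) (hn : 3 ≤ n) :
    1 ≤ gammaSR (graphJoin (cycleGraph m) (cycleGraph n)) ∧
    gammaSR (graphJoin (cycleGraph m) (cycleGraph n)) ≤ 4 := by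
  obtain ⟨k, rfl⟩ : ∃ k, m = k + 3 := ⟨m - 3, by omega⟩
  obtain ⟨l, rfl⟩ : ∃ l, n = l + 3 := ⟨n - 3, by omega⟩
  set S : Set ℤ := {w : ℤ | ∃ f, IsSRDF (graphJoin (cycleGraph (k+3)) (cycleGraph (l+3))) f
    ∧ w = ∑ v, f v} with hS
  have hmem : (4:ℤ) ∈ S := ⟨Fup k l, Fup_isSRDF k l, (Fup_sum k l).symm⟩
  have hlb : ∀ w ∈ S, (1:ℤ) ≤ w := by
    rintro w ⟨f, hf, rfl⟩
    exact srdf_weight_ge k l f hf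
  have hne : S.Nonempty := ⟨4, hmem⟩
  constructor
  · exact le_csInf hne hlb
  · exact csInf_le ⟨1, hlb⟩ hmem
end

section
/- Let n ≥ 13 with n not congruent to 2 mod 3. If f:V(Cₙ)→{−1,1,2} is any function whose total sum over the cycle equals 1, then there exists a vertex y of Cₙ with ∑_{z∈N[y]} f(z) < 0. -/
open Finset SimpleGraph
open scoped Classical

open scoped Fin.NatCast Fin.IntCast Fin.CommRing

/-- The window sum of `f` at `y`: `f (y-1) + f y + f (y+1)`. -/
private def W {n : ℕ} [NeZero n] (f : Fin n → ℤ) (y : Fin n) : ℤ :=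
  f (y - 1) + f y + f (y + 1)

/-- The closed neighborhood sum in the cycle is the window sum. -/
private lemma cns_eq {n : ℕ} [NeZero n] (hn : 13 ≤ n) (f : Fin n → ℤ) (y : Fin n) :
    closedNbrSum (cycleGraph n) f y = W f y := by
  rw [W]
  obtain ⟨m, rfl⟩ : ∃ m, n = m + 2 := ⟨n - 2, by omega⟩
  have h1 : (1 : Fin (m + 2)) ≠ 0 := by
    simp [Fin.ext_iff]
  have h2 : (2 : Fin (m + 2)) ≠ 0 := by
    have : ((2 : ℕ) : Fin (m + 2)).val = 2 % (m + 2) := Fin.val_natCast _ _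
    rw [Nat.mod_eq_of_lt (by omega)] at this
    intro h
    rw [show ((2:ℕ) : Fin (m+2)) = (2 : Fin (m+2)) by norm_cast, h] at this
    simp at this
  have hset : (Finset.univ.filter fun u => u = y ∨ (cycleGraph (m + 2)).Adj y u)
      = {y - 1, y, y + 1} := by
    ext u
    simp only [Finset.mem_filter, Finset.mem_univ, true_and, cycleGraph_adj,
      Finset.mem_insert, Finset.mem_singleton]
    constructor
    · rintro (rfl | h | h)
      · exact Or.inr (Or.inl rfl)
      · exact Or.inl (by linear_combination -h)
      · exact Or.inr (Or.inr (by linear_combination h))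
    · rintro (rfl | rfl | rfl)
      · exact Or.inr (Or.inl (by ring))
      · exact Or.inl rfl
      · exact Or.inr (Or.inr (by ring))
  rw [closedNbrSum, Finset.filter_congr_decidable, hset]
  rw [Finset.sum_insert (by
        simp only [Finset.mem_insert, Finset.mem_singleton]
        push_neg
        constructor
        · intro h; exact h1 (by linear_combination -h)
        · intro h; exact h2 (by linear_combination -h)),
      Finset.sum_pair (by intro h; exact h1 (by linear_combination -h))]
  ring

private lemma blocks3 (g : ℕ → ℤ) : ∀ m : ℕ,
    ∑ j ∈ Finset.range (3 * m), g j
      = ∑ k ∈ Finset.range m, (g (3 * k) + g (3 * k + 1) + g (3 * k + 2))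
  | 0 => by simp
  | (m + 1) => by
    have h : 3 * (m + 1) = (3 * m + 1 + 1) + 1 := by ring
    rw [h, Finset.sum_range_succ, Finset.sum_range_succ, Finset.sum_range_succ,
      blocks3 g m, Finset.sum_range_succ]
    ring

/-- Class-sum identity: windows centered at `v+1, v+4, …` sum the values
`f (v + j)` for `j < 3m`. -/
private lemma keyW {n : ℕ} [NeZero n] (f : Fin n → ℤ) (v : Fin n) (m : ℕ) :
    ∑ k ∈ Finset.range m, W f (v + ((3 * k + 1 : ℕ) : Fin n))
      = ∑ j ∈ Finset.range (3 * m), f (v + (j : Fin n)) := by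
  rw [blocks3]
  refine Finset.sum_congr rfl (fun k _ => ?_)
  have e1 : v + ((3 * k + 1 : ℕ) : Fin n) - 1 = v + ((3 * k : ℕ) : Fin n) := by
    push_cast; ring
  have e3 : v + ((3 * k + 1 : ℕ) : Fin n) + 1 = v + ((3 * k + 2 : ℕ) : Fin n) := by
    push_cast; ring
  rw [W, e1, e3]

theorem stmt7 (n : ℕ) (hn : 13 ≤ n) (hn3 : n % 3 ≠ 2)
    (f : Fin n → ℤ) (hf : ∀ v, f v = -1 ∨ f v = 1 ∨ f v = 2)
    (hsum : ∑ v, f v = 1) :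
    ∃ y : Fin n, closedNbrSum (cycleGraph n) f y < 0 := by
  haveI : NeZero n := ⟨by omega⟩
  by_contra hcon
  push_neg at hcon
  have hS0 : ∀ y : Fin n, 0 ≤ W f y := fun y => by
    rw [← cns_eq hn f y]; exact hcon y
  have hb : ∀ v : Fin n, -1 ≤ f v ∧ f v ≤ 2 ∧ f v ≠ 0 := fun v => by
    rcases hf v with h | h | h <;> rw [h] <;> norm_num
  -- total shifted sum
  have total : ∀ v : Fin n, ∑ j ∈ Finset.range n, f (v + (j : Fin n)) = 1 := by
    intro v
    rw [← Fin.sum_univ_eq_sum_range (fun j => f (v + (j : Fin n))) n]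
    rw [show (∑ i : Fin n, f (v + ((i : ℕ) : Fin n))) = ∑ i : Fin n, f (v + i) from
      Finset.sum_congr rfl (fun i _ => by rw [Fin.cast_val_eq_self])]
    have hc := Equiv.sum_comp (Equiv.addLeft v) f
    simp only [Equiv.coe_addLeft] at hc
    rw [hc]; exact hsum
  -- sum of all windows is 3
  have hshift1 : ∑ y : Fin n, f (y - 1) = 1 := by
    have hc := Equiv.sum_comp (Equiv.subRight (1 : Fin n)) f
    simp only [Equiv.subRight_apply] at hc
    rw [hc]; exact hsum
  have hshift2 : ∑ y : Fin n, f (y + 1) = 1 := by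
    have hc := Equiv.sum_comp (Equiv.addRight (1 : Fin n)) f
    simp only [Equiv.coe_addRight] at hc
    rw [hc]; exact hsum
  have hsum3 : ∑ y : Fin n, W f y = 3 := by
    simp only [W]
    rw [Finset.sum_add_distrib, Finset.sum_add_distrib, hshift1, hshift2, hsum]
    norm_num
  have h3 : n % 3 = 0 ∨ n % 3 = 1 := by omega
  rcases h3 with h3 | h3
  · -- n ≡ 0 (mod 3)
    obtain ⟨m, hm⟩ : ∃ m, n = 3 * m := ⟨n / 3, by omega⟩
    have hm5 : 5 ≤ m := by omega
    have class0 : ∀ v : Fin n,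
        ∑ k ∈ Finset.range m, W f (v + ((3 * k + 1 : ℕ) : Fin n)) = 1 := by
      intro v
      rw [keyW f v m, show 3 * m = n from hm.symm]
      exact total v
    have hSle1 : ∀ y : Fin n, W f y ≤ 1 := by
      intro y
      have h := class0 (y - 1)
      have h0 : W f (y - 1 + ((3 * 0 + 1 : ℕ) : Fin n)) ≤ 1 := by
        rw [← h]
        exact Finset.single_le_sum (fun k _ => hS0 _) (Finset.mem_range.mpr (by omega))
      have e : y - 1 + ((3 * 0 + 1 : ℕ) : Fin n) = y := by push_cast; ring
      rwa [e] at h0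
    -- there is a vertex with value 1
    obtain ⟨u, hu⟩ : ∃ u : Fin n, f u = 1 := by
      by_contra hno
      push_neg at hno
      have hz : ∀ y : Fin n, W f y = 0 := by
        intro y
        have h0 := hS0 y; have h1 := hSle1 y
        have b1 := hb (y - 1); have b2 := hb y; have b3 := hb (y + 1)
        have n1 := hno (y - 1); have n2 := hno y; have n3 := hno (y + 1)
        rw [W] at h0 h1 ⊢
        omega
      have : (3 : ℤ) = 0 := by
        rw [← hsum3, Finset.sum_congr rfl (fun y _ => hz y)]
        simp
      norm_num at this
    -- the three windows containing u all equal 1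
    have wu : W f u = 1 := by
      have h0 := hS0 u; have h1 := hSle1 u
      rw [W] at h0 h1 ⊢
      have b1 := hb (u - 1); have b3 := hb (u + 1)
      omega
    have wu1 : W f (u + 1) = 1 := by
      have h0 := hS0 (u + 1); have h1 := hSle1 (u + 1)
      rw [W, add_sub_cancel_right] at h0 h1 ⊢
      have b2 := hb (u + 1); have b3 := hb (u + 1 + 1)
      omega
    have wum1 : W f (u - 1) = 1 := by
      have h0 := hS0 (u - 1); have h1 := hSle1 (u - 1)
      rw [W, sub_add_cancel] at h0 h1 ⊢
      have b1 := hb (u - 1 - 1); have b2 := hb (u - 1)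
      omega
    -- W f (u + 2) = 0
    have hz2 : W f (u + 2) = 0 := by
      have hsub : ({0, 1} : Finset ℕ) ⊆ Finset.range m := by
        intro x hx
        simp only [Finset.mem_insert, Finset.mem_singleton] at hx
        rcases hx with rfl | rfl <;> exact Finset.mem_range.mpr (by omega)
      have hle := Finset.sum_le_sum_of_subset_of_nonneg
        (f := fun k => W f (u - 2 + ((3 * k + 1 : ℕ) : Fin n))) hsub (fun k _ _ => hS0 _)
      rw [class0 (u - 2), Finset.sum_pair (by norm_num)] at hle
      have e0 : u - 2 + ((3 * 0 + 1 : ℕ) : Fin n) = u - 1 := by push_cast; ring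
      have e1 : u - 2 + ((3 * 1 + 1 : ℕ) : Fin n) = u + 2 := by push_cast; ring
      rw [e0, e1, wum1] at hle
      have h0 := hS0 (u + 2)
      omega
    -- W f (u - 2) = 0
    have hz2' : W f (u - 2) = 0 := by
      have hsub : ({0, m - 1} : Finset ℕ) ⊆ Finset.range m := by
        intro x hx
        simp only [Finset.mem_insert, Finset.mem_singleton] at hx
        rcases hx with rfl | rfl <;> exact Finset.mem_range.mpr (by omega)
      have hle := Finset.sum_le_sum_of_subset_of_nonneg
        (f := fun k => W f (u + ((3 * k + 1 : ℕ) : Fin n))) hsub (fun k _ _ => hS0 _)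
      rw [class0 u, Finset.sum_pair (by omega)] at hle
      have e0 : u + ((3 * 0 + 1 : ℕ) : Fin n) = u + 1 := by push_cast; ring
      have hc2 : ((3 * (m - 1) + 1 : ℕ) : Fin n) = -2 := by
        have h2 : ((3 * (m - 1) + 1 : ℕ) : Fin n) + ((2 : ℕ) : Fin n)
            = ((3 * (m - 1) + 1 + 2 : ℕ) : Fin n) := by push_cast; ring
        rw [show 3 * (m - 1) + 1 + 2 = n from by omega, Fin.natCast_self] at h2
        have h2' : ((3 * (m - 1) + 1 : ℕ) : Fin n) + 2 = 0 := by
          rw [← h2]; norm_num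
        exact eq_neg_of_add_eq_zero_left h2'
      have e1 : u + ((3 * (m - 1) + 1 : ℕ) : Fin n) = u - 2 := by rw [hc2]; ring
      rw [e0, e1, wu1] at hle
      have h0 := hS0 (u - 2)
      omega
    -- final contradiction
    have E1 : f (u + 2 - 1) + f (u + 2) + f (u + 2 + 1) = 0 := hz2
    have E2 : f (u - 2 - 1) + f (u - 2) + f (u - 2 + 1) = 0 := hz2'
    have E3 : f (u - 1) + f u + f (u + 1) = 1 := wu
    rw [show u + 2 - 1 = u + 1 from by ring] at E1
    rw [show u - 2 + 1 = u - 1 from by ring] at E2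
    have b1 := hb (u - 1); have b2 := hb (u + 1)
    have b3 := hb (u + 2); have b4 := hb (u + 2 + 1)
    have b5 := hb (u - 2); have b6 := hb (u - 2 - 1)
    omega
  · -- n ≡ 1 (mod 3)
    obtain ⟨m, hm⟩ : ∃ m, n = 3 * m + 1 := ⟨n / 3, by omega⟩
    have hm4 : 4 ≤ m := by omega
    have class1 : ∀ v : Fin n,
        ∑ k ∈ Finset.range m, W f (v + ((3 * k + 1 : ℕ) : Fin n)) = 1 - f (v - 1) := by
      intro v
      rw [keyW f v m]
      have ht := total v
      rw [show Finset.range n = Finset.range (3 * m + 1) from by rw [← hm],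
        Finset.sum_range_succ] at ht
      have hc : ((3 * m : ℕ) : Fin n) = -1 := by
        have h2 : ((3 * m : ℕ) : Fin n) + ((1 : ℕ) : Fin n)
            = ((3 * m + 1 : ℕ) : Fin n) := by push_cast; ring
        rw [show 3 * m + 1 = n from hm.symm, Fin.natCast_self, Nat.cast_one] at h2
        exact eq_neg_of_add_eq_zero_left h2
      rw [show v + ((3 * m : ℕ) : Fin n) = v - 1 from by rw [hc]; ring] at ht
      linarith
    have hfle : ∀ w : Fin n, f w ≤ 1 := by
      intro w
      have hnn : (0 : ℤ) ≤ ∑ k ∈ Finset.range m, W f (w + 1 + ((3 * k + 1 : ℕ) : Fin n)) :=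
        Finset.sum_nonneg (fun k _ => hS0 _)
      rw [class1 (w + 1), add_sub_cancel_right] at hnn
      omega
    have hW1 : ∀ y : Fin n, 1 ≤ W f y := by
      intro y
      have h0 := hS0 y
      have b1 := hb (y - 1); have b2 := hb y; have b3 := hb (y + 1)
      have l1 := hfle (y - 1); have l2 := hfle y; have l3 := hfle (y + 1)
      rw [W] at h0 ⊢
      omega
    have hcard : ((n : ℤ)) ≤ 3 := by
      calc (n : ℤ) = ∑ _y : Fin n, (1 : ℤ) := by simp
        _ ≤ ∑ y : Fin n, W f y := Finset.sum_le_sum (fun y _ => hW1 y)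
        _ = 3 := hsum3
    have : (13 : ℤ) ≤ (n : ℤ) := by exact_mod_cast hn
    linarith
end

section
/- Let m ≥ 13 and n ≥ 13 be integers with m ≡ 2 (mod 3) and n not congruent to 2 mod 3. Then γ_sR(Cₘ ∨ Cₙ) = 3. -/
open Finset SimpleGraph
open scoped Classical

section Aux

lemma join_inl {V W : Type*} [Fintype V] [Fintype W] (G : SimpleGraph V) (H : SimpleGraph W)
    (f : V ⊕ W → ℤ) (a : V) :
    closedNbrSum (graphJoin G H) f (.inl a)
      = closedNbrSum G (fun v => f (.inl v)) a + ∑ w, f (.inr w) := by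
  classical
  simp only [closedNbrSum, Finset.sum_filter, Fintype.sum_sum_type]
  congr 1
  · exact Finset.sum_congr rfl fun v _ => by simp [graphJoin, Sum.inl.injEq]
  · exact Finset.sum_congr rfl fun w _ => by simp [graphJoin]

lemma join_inr {V W : Type*} [Fintype V] [Fintype W] (G : SimpleGraph V) (H : SimpleGraph W)
    (f : V ⊕ W → ℤ) (a : W) :
    closedNbrSum (graphJoin G H) f (.inr a)
      = closedNbrSum H (fun v => f (.inr v)) a + ∑ w, f (.inl w) := by
  classical
  simp only [closedNbrSum, Finset.sum_filter, Fintype.sum_sum_type]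
  rw [add_comm]
  congr 1
  · exact Finset.sum_congr rfl fun w _ => by simp [graphJoin]
  · exact Finset.sum_congr rfl fun v _ => by simp [graphJoin, Sum.inr.injEq]

lemma cycle_closed (n : ℕ) [NeZero n] (hn : 3 ≤ n) (h : Fin n → ℤ) (v : Fin n) :
    closedNbrSum (cycleGraph n) h v = h (v - 1) + h v + h (v + 1) := by
  classical
  have hval1 : (1 : Fin n).val = 1 := by
    rw [Fin.val_one']; exact Nat.mod_eq_of_lt (by omega)
  have h10 : (1 : Fin n) ≠ 0 := by
    intro hh; apply_fun Fin.val at hh; rw [hval1] at hh; simp at hh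
  have hv2 : ((1 : Fin n) + 1).val = 2 := by
    rw [Fin.val_add, hval1]; exact Nat.mod_eq_of_lt (by omega)
  have h20 : (1 : Fin n) + 1 ≠ 0 := by
    intro hh; apply_fun Fin.val at hh; rw [hv2] at hh; simp at hh
  have hsub : ∀ u : Fin n, u - v = 1 ↔ u = v + 1 := by
    intro u; rw [sub_eq_iff_eq_add, add_comm]
  have hsub' : ∀ u : Fin n, v - u = 1 ↔ u = v - 1 := by
    intro u; rw [sub_eq_iff_eq_add, eq_sub_iff_add_eq, add_comm u 1, eq_comm]
  have hset : Finset.univ.filter (fun u => u = v ∨ (cycleGraph n).Adj v u)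
      = {v - 1, v, v + 1} := by
    ext u
    simp only [Finset.mem_filter, Finset.mem_univ, true_and, Finset.mem_insert,
      Finset.mem_singleton, cycleGraph_adj']
    rw [show ((v - u).val = 1 ↔ v - u = 1) by rw [Fin.ext_iff, hval1],
      show ((u - v).val = 1 ↔ u - v = 1) by rw [Fin.ext_iff, hval1], hsub, hsub']
    tauto
  rw [closedNbrSum]
  rw [Finset.filter_congr_decidable] at hset ⊢
  rw [hset]
  have d1 : v - 1 ≠ v := by
    intro hh; rw [sub_eq_iff_eq_add, left_eq_add] at hh; exact h10 hh
  have d2 : v - 1 ≠ v + 1 := by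
    intro hh; rw [sub_eq_iff_eq_add, add_assoc, left_eq_add] at hh
    exact h20 hh
  have d3 : v ≠ v + 1 := by
    intro hh; rw [left_eq_add] at hh; exact h10 hh
  rw [Finset.sum_insert (by simp [d1, d2]), Finset.sum_insert (by simp [d3]),
    Finset.sum_singleton, add_assoc]

lemma key (n : ℕ) [NeZero n] (hn : 13 ≤ n) (hn3 : n % 3 ≠ 2) (h : Fin n → ℤ)
    (hv : ∀ v, h v = -1 ∨ h v = 1 ∨ h v = 2)
    (hw : ∀ v : Fin n, 0 ≤ h v + h (v + 1) + h (v + 1 + 1))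
    (hs : ∑ v, h v = 1) : False := by
  have hval1 : (1 : Fin n).val = 1 := by
    rw [Fin.val_one']; exact Nat.mod_eq_of_lt (by omega)
  set g : ℕ → ℤ := fun i => h ⟨i % n, Nat.mod_lt _ (by omega)⟩ with hg
  have hper : ∀ i, g (i + n) = g i := by
    intro i; simp only [hg, Nat.add_mod_right]
  have hmk : ∀ i : ℕ, (⟨i % n, Nat.mod_lt _ (by omega)⟩ : Fin n) + 1
      = ⟨(i+1) % n, Nat.mod_lt _ (by omega)⟩ := by
    intro i
    apply Fin.ext
    rw [Fin.val_add, hval1]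
    simp only [Nat.mod_add_mod]
  have hgv : ∀ i, g i = -1 ∨ g i = 1 ∨ g i = 2 := fun i => hv _
  have hgwin : ∀ i, 0 ≤ g i + g (i+1) + g (i+2) := by
    intro i
    have H := hw ⟨i % n, Nat.mod_lt _ (by omega)⟩
    rw [hmk i, hmk (i+1)] at H
    exact H
  have hsum : ∑ i ∈ range n, g i = 1 := by
    rw [← hs, ← Fin.sum_univ_eq_sum_range]
    apply Finset.sum_congr rfl
    intro v _
    simp only [hg]
    congr 1
    exact Fin.ext (Nat.mod_eq_of_lt v.isLt)
  set F : ℕ → ℤ := fun i => ∑ j ∈ range i, g j with hFdef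
  have hF : ∀ i, F (i+1) = F i + g i := by
    intro i; simp only [hFdef]; rw [Finset.sum_range_succ]
  have hF3 : ∀ a, F a ≤ F (a + 3) := by
    intro a
    have e : F (a+3) = F a + (g a + g (a+1) + g (a+2)) := by
      rw [show a + 3 = (a+1+1)+1 by omega, hF, hF, hF]; ring_nf
    have := hgwin a; omega
  have hmono : ∀ a k, F a ≤ F (a + 3 * k) := by
    intro a k
    induction k with
    | zero => simp
    | succ t ih =>
        have e : a + 3 * (t+1) = (a + 3*t) + 3 := by ring
        rw [e]; exact le_trans ih (hF3 _)
  have hFper : ∀ a, F (a + n) = F a + 1 := by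
    intro a
    induction a with
    | zero => simpa [hFdef] using hsum
    | succ t ih =>
        have e : t + 1 + n = (t + n) + 1 := by ring
        rw [e, hF, hF, ih, hper]; ring
  have htri : n % 3 = 0 ∨ n % 3 = 1 ∨ n % 3 = 2 := by omega
  rcases htri with h3 | h3 | h3
  · obtain ⟨q, hq⟩ : ∃ q, n = 3 * q := ⟨n/3, by omega⟩
    have hq5 : 5 ≤ q := by omega
    have hW : ∀ a k, k ≤ q → F (a + 3*k) ≤ F a + 1 := by
      intro a k hk
      have h1 : F (a + 3*k) ≤ F ((a + 3*k) + 3*(q - k)) := hmono _ _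
      have h2 : (a + 3*k) + 3*(q-k) = a + n := by omega
      rw [h2, hFper] at h1; exact h1
    have hdiff : ∀ j k, k ≤ q → g (j + 3*k) ≤ g j + 1 ∧ g j ≤ g (j + 3*k) + 1 := by
      intro j k hk
      have e1 := hW j k hk
      have e2 := hmono j k
      have e3 := hW (j+1) k hk
      have e4 := hmono (j+1) k
      have e5 := hF j
      have e6 := hF (j + 3*k)
      have e7 : (j+1) + 3*k = (j + 3*k) + 1 := by omega
      rw [e7] at e3 e4
      omega
    have hclass : ∀ r, (∃ k, k < q ∧ g (3*k + r) = -1) → ∀ k, k < q → g (3*k + r) = -1 := by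
      rintro r ⟨k0, hk0, hg0⟩ k hk
      rcases le_or_gt k0 k with hle | hlt
      · have hd := hdiff (3*k0 + r) (k - k0) (by omega)
        have e : (3*k0 + r) + 3*(k - k0) = 3*k + r := by omega
        rw [e] at hd; rcases hgv (3*k + r) with h'|h'|h' <;> omega
      · have hd := hdiff (3*k + r) (k0 - k) (by omega)
        have e : (3*k + r) + 3*(k0 - k) = 3*k0 + r := by omega
        rw [e] at hd; rcases hgv (3*k+r) with h'|h'|h' <;> omega
    set s : ℕ → ℤ := fun r => ∑ k ∈ range q, g (3*k + r) with hsdef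
    have hsplit : s 0 + s 1 + s 2 = 1 := by
      have key : ∀ Q, ∑ i ∈ range (3*Q), g i
          = (∑ k ∈ range Q, g (3*k + 0)) + (∑ k ∈ range Q, g (3*k + 1))
            + (∑ k ∈ range Q, g (3*k + 2)) := by
        intro Q
        induction Q with
        | zero => simp
        | succ t ih =>
            rw [show 3 * (t+1) = ((3*t)+1+1)+1 by ring, sum_range_succ, sum_range_succ,
              sum_range_succ, ih, sum_range_succ, sum_range_succ, sum_range_succ]
            simp only [Nat.add_zero]
            ring
      have hk := key q
      rw [← hq, hsum] at hk
      simp only [hsdef]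
      omega
    have hbound : ∀ r, s r = -(q:ℤ) ∨ ((q:ℤ) ≤ s r ∧ s r ≤ 2*(q:ℤ)) := by
      intro r
      by_cases hex : ∃ k, k < q ∧ g (3*k + r) = -1
      · left
        have hall := hclass r hex
        have he : s r = ∑ k ∈ range q, (-1:ℤ) :=
          Finset.sum_congr rfl (fun k hk => hall k (mem_range.mp hk))
        rw [he]; simp
      · right
        push_neg at hex
        constructor
        · have he : (q:ℤ) = ∑ _k ∈ range q, (1:ℤ) := by simp
          rw [he]
          apply Finset.sum_le_sum
          intro k hk
          rcases hgv (3*k+r) with h'|h'|h'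
          · exact absurd h' (hex k (mem_range.mp hk))
          · omega
          · omega
        · have he : 2*(q:ℤ) = ∑ _k ∈ range q, (2:ℤ) := by simp [mul_comm]
          rw [he]
          apply Finset.sum_le_sum
          intro k hk
          rcases hgv (3*k+r) with h'|h'|h' <;> omega
    have b0 := hbound 0; have b1 := hbound 1; have b2 := hbound 2
    have hq5' : (5:ℤ) ≤ (q:ℤ) := by exact_mod_cast hq5
    omega
  · have hle1 : ∀ i, g i ≤ 1 := by
      intro i
      have h1 : F (i+1) ≤ F ((i+1) + 3 * ((n-1)/3)) := hmono _ _
      have h2 : (i+1) + 3*((n-1)/3) = i + n := by omega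
      rw [h2, hFper] at h1
      have := hF i
      omega
    have hone : ∀ i, 1 ≤ g i + g (i+1) + g (i+2) := by
      intro i
      have a1 := hle1 i; have a2 := hle1 (i+1); have a3 := hle1 (i+2)
      have := hgwin i
      rcases hgv i with h'|h'|h' <;> rcases hgv (i+1) with h''|h''|h'' <;>
        rcases hgv (i+2) with h'''|h'''|h''' <;> omega
    have hshift : ∀ s k, ∑ i ∈ range k, g (i + s) = F (s + k) - F s := by
      intro s k
      induction k with
      | zero => simp
      | succ t ih =>
          rw [sum_range_succ, ih, show s + (t+1) = (s+t)+1 by ring, hF,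
            show t + s = s + t by ring]
          ring
    have hsum3 : ∑ i ∈ range n, (g i + g (i+1) + g (i+2)) = 3 := by
      rw [Finset.sum_add_distrib, Finset.sum_add_distrib, hsum, hshift 1 n, hshift 2 n,
        hFper 1, hFper 2]
      ring
    have hn3' : (n:ℤ) ≤ 3 := by
      have h1 : ∑ _i ∈ range n, (1:ℤ) ≤ ∑ i ∈ range n, (g i + g (i+1) + g (i+2)) :=
        Finset.sum_le_sum (fun i _ => hone i)
      rw [hsum3] at h1; simpa using h1
    have hn13 : (13:ℤ) ≤ (n:ℤ) := by exact_mod_cast hn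
    omega
  · exact hn3 h3

lemma cyc_sum_bound (n : ℕ) [NeZero n] (h : Fin n → ℤ) (c : ℤ)
    (hw : ∀ v : Fin n, c ≤ h (v-1) + h v + h (v+1)) :
    (n:ℤ) * c ≤ 3 * ∑ v, h v := by
  have e1 : ∑ v : Fin n, h (v - 1) = ∑ v, h v := Equiv.sum_comp (Equiv.subRight (1:Fin n)) h
  have e2 : ∑ v : Fin n, h (v + 1) = ∑ v, h v := Equiv.sum_comp (Equiv.addRight (1:Fin n)) h
  calc (n:ℤ)*c = ∑ _v : Fin n, c := by simp [mul_comm]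
    _ ≤ ∑ v, (h (v-1) + h v + h (v+1)) := Finset.sum_le_sum fun v _ => hw v
    _ = 3 * ∑ v, h v := by rw [Finset.sum_add_distrib, Finset.sum_add_distrib, e1, e2]; ring

lemma lower (m n : ℕ) (hm : 13 ≤ m) (hn : 13 ≤ n) (hn3 : n % 3 ≠ 2)
    (f : Fin m ⊕ Fin n → ℤ)
    (hf : IsSRDF (graphJoin (cycleGraph m) (cycleGraph n)) f) :
    3 ≤ ∑ v, f v := by
  haveI : NeZero m := ⟨by omega⟩
  haveI : NeZero n := ⟨by omega⟩
  obtain ⟨hvals, hnb, _⟩ := hf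
  have htot : ∑ v, f v = (∑ a : Fin m, f (.inl a)) + ∑ b : Fin n, f (.inr b) :=
    Fintype.sum_sum_type f
  have hwm : ∀ a : Fin m, 1 - (∑ b : Fin n, f (.inr b))
      ≤ f (.inl (a-1)) + f (.inl a) + f (.inl (a+1)) := by
    intro a
    have h1 := hnb (.inl a)
    rw [join_inl, cycle_closed m (by omega)] at h1
    linarith
  have hwn : ∀ b : Fin n, 1 - (∑ a : Fin m, f (.inl a))
      ≤ f (.inr (b-1)) + f (.inr b) + f (.inr (b+1)) := by
    intro b
    have h1 := hnb (.inr b)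
    rw [join_inr, cycle_closed n (by omega)] at h1
    linarith
  have hbm : (m:ℤ) * (1 - ∑ b : Fin n, f (.inr b)) ≤ 3 * ∑ a : Fin m, f (.inl a) :=
    cyc_sum_bound m (fun a => f (.inl a)) _ hwm
  have hbn : (n:ℤ) * (1 - ∑ a : Fin m, f (.inl a)) ≤ 3 * ∑ b : Fin n, f (.inr b) :=
    cyc_sum_bound n (fun b => f (.inr b)) _ hwn
  by_contra hcon
  push_neg at hcon
  rw [htot] at hcon
  have hm' : (13:ℤ) ≤ (m:ℤ) := by exact_mod_cast hm
  have hn' : (13:ℤ) ≤ (n:ℤ) := by exact_mod_cast hn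
  rcases le_or_gt (∑ b : Fin n, f (.inr b)) 0 with hB | hB
  · have h13 : (13:ℤ) * (1 - ∑ b : Fin n, f (.inr b))
        ≤ (m:ℤ) * (1 - ∑ b : Fin n, f (.inr b)) :=
      mul_le_mul_of_nonneg_right hm' (by linarith)
    linarith
  rcases le_or_gt (∑ a : Fin m, f (.inl a)) 0 with hA | hA
  · have h13 : (13:ℤ) * (1 - ∑ a : Fin m, f (.inl a))
        ≤ (n:ℤ) * (1 - ∑ a : Fin m, f (.inl a)) :=
      mul_le_mul_of_nonneg_right hn' (by linarith)
    linarith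
  have hA1 : (∑ a : Fin m, f (.inl a)) = 1 := by
    have u1 : (0:ℤ) + 1 ≤ ∑ a : Fin m, f (.inl a) := Int.add_one_le_of_lt hA
    have u2 : (0:ℤ) + 1 ≤ ∑ b : Fin n, f (.inr b) := Int.add_one_le_of_lt hB
    linarith
  have hB1 : (∑ b : Fin n, f (.inr b)) = 1 := by
    have u1 : (0:ℤ) + 1 ≤ ∑ a : Fin m, f (.inl a) := Int.add_one_le_of_lt hA
    linarith
  apply key n hn hn3 (fun b => f (.inr b)) (fun b => hvals (.inr b))
  · intro v
    have h1 := hwn (v + 1)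
    rw [add_sub_cancel_right, hA1] at h1
    simpa using h1
  · exact hB1

lemma three_consec (N : ℕ) [NeZero N] (hN : 3 ≤ N) (v : Fin N) :
    (v - 1).val % 3 = 0 ∨ v.val % 3 = 0 ∨ (v + 1).val % 3 = 0 := by
  have hv := v.isLt
  have hval1 : (1 : Fin N).val = 1 := by
    rw [Fin.val_one']; exact Nat.mod_eq_of_lt (by omega)
  have hsub : (v - 1).val = if v.val = 0 then N - 1 else v.val - 1 := by
    rw [Fin.sub_def, hval1]
    show (N - 1 + v.val) % N = _
    split
    · rename_i h0; rw [h0]; exact Nat.mod_eq_of_lt (by omega)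
    · rename_i h0
      rw [show N - 1 + v.val = N + (v.val - 1) by omega, Nat.add_mod_left]
      exact Nat.mod_eq_of_lt (by omega)
  have hadd : (v + 1).val = if v.val = N - 1 then 0 else v.val + 1 := by
    rw [Fin.val_add, hval1]
    split
    · rename_i h0; rw [h0, show N - 1 + 1 = N by omega, Nat.mod_self]
    · exact Nat.mod_eq_of_lt (by omega)
  rw [hsub, hadd]
  split_ifs <;> omega

lemma sumA : ∀ k, ∑ i ∈ range (3*k+2), (if i % 3 = 0 then (2:ℤ) else -1) = 1 := by
  intro k
  induction k with
  | zero => decide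
  | succ t ih =>
      rw [show 3*(t+1)+2 = ((3*t+2)+1+1)+1 by ring, sum_range_succ, sum_range_succ,
        sum_range_succ, ih]
      rw [if_neg (by omega), if_pos (by omega), if_neg (by omega)]
      ring

lemma sumB0 : ∀ j, ∑ i ∈ range (3*(j+1)),
    (if i % 3 = 0 then (2:ℤ) else if i = 1 then 1 else -1) = 2 := by
  intro j
  induction j with
  | zero => decide
  | succ t ih =>
      rw [show 3*(t+1+1) = ((3*(t+1))+1+1)+1 by ring, sum_range_succ, sum_range_succ,
        sum_range_succ, ih]
      rw [if_pos (by omega), if_neg (by omega), if_neg (by omega), if_neg (by omega),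
        if_neg (by omega)]
      ring

lemma sumB1 : ∀ j, ∑ i ∈ range (3*j+1), (if i % 3 = 0 then (2:ℤ) else -1) = 2 := by
  intro j
  induction j with
  | zero => decide
  | succ t ih =>
      rw [show 3*(t+1)+1 = ((3*t+1)+1+1)+1 by ring, sum_range_succ, sum_range_succ,
        sum_range_succ, ih]
      rw [if_neg (by omega), if_neg (by omega), if_pos (by omega)]
      ring

lemma upper (m n : ℕ) (hm : 13 ≤ m) (hn : 13 ≤ n) (hm3 : m % 3 = 2) (hn3 : n % 3 ≠ 2) :
    ∃ f, IsSRDF (graphJoin (cycleGraph m) (cycleGraph n)) f ∧ (3:ℤ) = ∑ v, f v := by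
  haveI : NeZero m := ⟨by omega⟩
  haveI : NeZero n := ⟨by omega⟩
  set fm : Fin m → ℤ := fun a => if a.val % 3 = 0 then 2 else -1 with hfm
  set fn : Fin n → ℤ := fun b =>
    if b.val % 3 = 0 then 2 else if n % 3 = 0 ∧ b.val = 1 then 1 else -1 with hfn
  refine ⟨Sum.elim fm fn, ⟨?_, ?_, ?_⟩, ?_⟩
  · rintro (a | b)
    · simp only [Sum.elim_inl, hfm]; split_ifs <;> simp
    · simp only [Sum.elim_inr, hfn]; split_ifs <;> simp
  · have hA : ∑ a : Fin m, fm a = 1 := by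
      obtain ⟨k, rfl⟩ : ∃ k, m = 3*k+2 := ⟨m/3, by omega⟩
      rw [hfm, Fin.sum_univ_eq_sum_range (fun i => if i % 3 = 0 then (2:ℤ) else -1) (3*k+2)]
      exact sumA k
    have hB : ∑ b : Fin n, fn b = 2 := by
      rcases (show n % 3 = 0 ∨ n % 3 = 1 by omega) with h0 | h1
      · have : fn = fun b : Fin n => if b.val % 3 = 0 then (2:ℤ) else if b.val = 1 then 1 else -1 := by
          funext b; rw [hfn]; simp [h0]
        rw [this]
        obtain ⟨j, rfl⟩ : ∃ j, n = 3*(j+1) := ⟨n/3 - 1, by omega⟩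
        rw [Fin.sum_univ_eq_sum_range
          (fun i => if i % 3 = 0 then (2:ℤ) else if i = 1 then 1 else -1) (3*(j+1))]
        exact sumB0 j
      · have : fn = fun b : Fin n => if b.val % 3 = 0 then (2:ℤ) else -1 := by
          funext b; rw [hfn]; simp [h1]
        rw [this]
        obtain ⟨j, rfl⟩ : ∃ j, n = 3*j+1 := ⟨n/3, by omega⟩
        rw [Fin.sum_univ_eq_sum_range (fun i => if i % 3 = 0 then (2:ℤ) else -1) (3*j+1)]
        exact sumB1 j
    have hmge : ∀ x : Fin m, -1 ≤ fm x := by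
      intro x; rw [hfm]; dsimp only; split_ifs <;> omega
    have hnge : ∀ x : Fin n, -1 ≤ fn x := by
      intro x; rw [hfn]; dsimp only; split_ifs <;> omega
    rintro (a | b)
    · rw [join_inl, cycle_closed m (by omega)]
      simp only [Sum.elim_inl, Sum.elim_inr, hB]
      have h2 : (2:ℤ) ≤ fm (a-1) + fm a + fm (a+1) - (-1) - (-1) + (-1) + (-1) + 2 := by
        rcases three_consec m (by omega) a with hc | hc | hc
        · have : fm (a-1) = 2 := by rw [hfm]; dsimp only; rw [if_pos hc]
          have g1 := hmge a; have g2 := hmge (a+1); linarith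
        · have : fm a = 2 := by rw [hfm]; dsimp only; rw [if_pos hc]
          have g1 := hmge (a-1); have g2 := hmge (a+1); linarith
        · have : fm (a+1) = 2 := by rw [hfm]; dsimp only; rw [if_pos hc]
          have g1 := hmge (a-1); have g2 := hmge a; linarith
      linarith
    · rw [join_inr, cycle_closed n (by omega)]
      simp only [Sum.elim_inl, Sum.elim_inr, hA]
      have h2 : (0:ℤ) ≤ fn (b-1) + fn b + fn (b+1) := by
        rcases three_consec n (by omega) b with hc | hc | hc
        · have : fn (b-1) = 2 := by rw [hfn]; dsimp only; rw [if_pos hc]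
          have g1 := hnge b; have g2 := hnge (b+1); linarith
        · have : fn b = 2 := by rw [hfn]; dsimp only; rw [if_pos hc]
          have g1 := hnge (b-1); have g2 := hnge (b+1); linarith
        · have : fn (b+1) = 2 := by rw [hfn]; dsimp only; rw [if_pos hc]
          have g1 := hnge (b-1); have g2 := hnge b; linarith
      linarith
  · rintro (a | b) _
    · refine ⟨.inr ⟨0, by omega⟩, ?_, ?_⟩
      · show True; trivial
      · simp only [Sum.elim_inr, hfn]; norm_num
    · refine ⟨.inl ⟨0, by omega⟩, ?_, ?_⟩
      · show True; trivial
      · simp only [Sum.elim_inl, hfm]; norm_num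
  · rw [Fintype.sum_sum_type]
    simp only [Sum.elim_inl, Sum.elim_inr]
    have hA : ∑ a : Fin m, fm a = 1 := by
      obtain ⟨k, rfl⟩ : ∃ k, m = 3*k+2 := ⟨m/3, by omega⟩
      rw [hfm, Fin.sum_univ_eq_sum_range (fun i => if i % 3 = 0 then (2:ℤ) else -1) (3*k+2)]
      exact sumA k
    have hB : ∑ b : Fin n, fn b = 2 := by
      rcases (show n % 3 = 0 ∨ n % 3 = 1 by omega) with h0 | h1
      · have : fn = fun b : Fin n => if b.val % 3 = 0 then (2:ℤ) else if b.val = 1 then 1 else -1 := by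
          funext b; rw [hfn]; simp [h0]
        rw [this]
        obtain ⟨j, rfl⟩ : ∃ j, n = 3*(j+1) := ⟨n/3 - 1, by omega⟩
        rw [Fin.sum_univ_eq_sum_range
          (fun i => if i % 3 = 0 then (2:ℤ) else if i = 1 then 1 else -1) (3*(j+1))]
        exact sumB0 j
      · have : fn = fun b : Fin n => if b.val % 3 = 0 then (2:ℤ) else -1 := by
          funext b; rw [hfn]; simp [h1]
        rw [this]
        obtain ⟨j, rfl⟩ : ∃ j, n = 3*j+1 := ⟨n/3, by omega⟩
        rw [Fin.sum_univ_eq_sum_range (fun i => if i % 3 = 0 then (2:ℤ) else -1) (3*j+1)]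
        exact sumB1 j
    rw [hA, hB]
    norm_num
end Aux

theorem stmt8 (m n : ℕ) (hm : 13 ≤ m) (hn : 13 ≤ n)
    (hm3 : m % 3 = 2) (hn3 : n % 3 ≠ 2) :
    gammaSR (graphJoin (cycleGraph m) (cycleGraph n)) = 3 := by
  obtain ⟨f0, hf0, hw0⟩ := upper m n hm hn hm3 hn3
  have h3 : (3:ℤ) ∈ {w : ℤ | ∃ f, IsSRDF (graphJoin (cycleGraph m) (cycleGraph n)) f
      ∧ w = ∑ v, f v} := ⟨f0, hf0, hw0⟩
  have hlb : ∀ w ∈ {w : ℤ | ∃ f, IsSRDF (graphJoin (cycleGraph m) (cycleGraph n)) f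
      ∧ w = ∑ v, f v}, (3:ℤ) ≤ w := by
    rintro w ⟨f, hf, rfl⟩
    exact lower m n hm hn hn3 f hf
  rw [gammaSR]
  exact le_antisymm (csInf_le ⟨3, hlb⟩ h3) (le_csInf ⟨3, h3⟩ hlb)
end

section
/- Let m ≥ 13 and n ≥ 13 be integers with m ≢ 2 (mod 3) and n ≢ 2 (mod 3). Then γ_sR(Cₘ ∨ Cₙ) = 3. -/
open Finset SimpleGraph
open scoped Classical

open Fin.NatCast Fin.CommRing

theorem fin_cast_ne (m : ℕ) [NeZero m] (hm : 13 ≤ m) (k : ℕ) (hk : k ≤ 5) (hk0 : 0 < k) : ((k:Fin m)) ≠ 0 := by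
  intro h
  have h2 := congrArg Fin.val h
  simp [Fin.val_natCast] at h2
  rw [Nat.mod_eq_of_lt (by omega)] at h2
  omega

theorem fin_sub_ne_add (m : ℕ) [NeZero m] (hm : 13 ≤ m) (j : Fin m) : j - 1 ≠ j + 1 := by
  intro h
  apply fin_cast_ne m hm 2 (by norm_num) (by norm_num)
  have h2 : (j + 1) - (j - 1) = ((2:ℕ):Fin m) := by push_cast; ring
  rw [← h2, ← h, sub_self]

theorem fin_sub_ne_self (m : ℕ) [NeZero m] (hm : 13 ≤ m) (j : Fin m) : j - 1 ≠ j := by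
  intro h
  apply fin_cast_ne m hm 1 (by norm_num) (by norm_num)
  have h2 : j - (j - 1) = ((1:ℕ):Fin m) := by push_cast; ring
  rw [← h2, h, sub_self]

theorem fin_self_ne_add (m : ℕ) [NeZero m] (hm : 13 ≤ m) (j : Fin m) : j ≠ j + 1 := by
  intro h
  apply fin_cast_ne m hm 1 (by norm_num) (by norm_num)
  have h2 : (j + 1) - j = ((1:ℕ):Fin m) := by push_cast; ring
  rw [← h2, ← h, sub_self]

theorem sub_val_eq_one (m : ℕ) [NeZero m] (hm : 13 ≤ m) (a u : Fin m) :
    (a - u).val = 1 ↔ a - u = 1 := by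
  rw [Fin.ext_iff, Fin.val_one']
  rw [Nat.mod_eq_of_lt (by omega)]

theorem cycle_filter (m : ℕ) [NeZero m] (hm : 13 ≤ m) (a : Fin m) :
    (univ.filter (fun u => u = a ∨ (cycleGraph m).Adj a u)) = {a - 1, a, a + 1} := by
  ext u
  simp only [mem_filter, mem_univ, true_and, mem_insert, mem_singleton,
    cycleGraph_adj', sub_val_eq_one m hm]
  constructor
  · rintro (h | h | h)
    · exact Or.inr (Or.inl h)
    · left; rw [sub_eq_iff_eq_add] at h; rw [h]; abel
    · right; right; rw [sub_eq_iff_eq_add] at h; rw [h]; abel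
  · rintro (h | h | h)
    · right; left; rw [h]; abel
    · exact Or.inl h
    · right; right; rw [h]; abel

def wnd {m : ℕ} [NeZero m] (g : Fin m → ℤ) (a : Fin m) : ℤ := g (a-1) + g a + g (a+1)

theorem sum_three (m : ℕ) [NeZero m] (hm : 13 ≤ m) (g : Fin m → ℤ) (a : Fin m) :
    ∑ u ∈ ({a-1, a, a+1} : Finset (Fin m)), g u = wnd g a := by
  rw [show ({a-1, a, a+1} : Finset (Fin m)) = insert (a-1) (insert a {a+1}) from rfl]
  rw [Finset.sum_insert (by
    simp only [mem_insert, mem_singleton]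
    push_neg
    exact ⟨fin_sub_ne_self m hm a, fin_sub_ne_add m hm a⟩)]
  rw [Finset.sum_insert (by simp [fin_self_ne_add m hm a])]
  rw [Finset.sum_singleton, wnd]; ring

theorem closedNbrSum_inl (m n : ℕ) [NeZero m] [NeZero n] (hm : 13 ≤ m) (hn : 13 ≤ n)
    (f : Fin m ⊕ Fin n → ℤ) (a : Fin m) :
    closedNbrSum (graphJoin (cycleGraph m) (cycleGraph n)) f (.inl a)
      = wnd (fun i => f (.inl i)) a + ∑ b, f (.inr b) := by
  unfold closedNbrSum
  rw [Finset.sum_filter, Fintype.sum_sum_type]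
  congr 1
  · have h3 : ∀ u : Fin m, ((Sum.inl u : Fin m ⊕ Fin n) = Sum.inl a ∨
          (graphJoin (cycleGraph m) (cycleGraph n)).Adj (.inl a) (.inl u))
        ↔ (u = a ∨ (cycleGraph m).Adj a u) := by
      intro u
      constructor
      · rintro (h | h)
        · exact Or.inl (Sum.inl_injective h)
        · exact Or.inr h
      · rintro (h | h)
        · exact Or.inl (by rw [h])
        · exact Or.inr h
    rw [← sum_three m hm (fun i => f (.inl i)) a, ← cycle_filter m hm a, Finset.sum_filter]
    apply Finset.sum_congr rfl; intro u _; simp only [h3 u]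
  · apply Finset.sum_congr rfl
    intro b _
    have hb : (Sum.inr b : Fin m ⊕ Fin n) = Sum.inl a ∨
        (graphJoin (cycleGraph m) (cycleGraph n)).Adj (.inl a) (.inr b) := Or.inr trivial
    rw [if_pos hb]

theorem closedNbrSum_inr (m n : ℕ) [NeZero m] [NeZero n] (hm : 13 ≤ m) (hn : 13 ≤ n)
    (f : Fin m ⊕ Fin n → ℤ) (b : Fin n) :
    closedNbrSum (graphJoin (cycleGraph m) (cycleGraph n)) f (.inr b)
      = wnd (fun i => f (.inr i)) b + ∑ a, f (.inl a) := by
  unfold closedNbrSum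
  rw [Finset.sum_filter, Fintype.sum_sum_type]
  rw [add_comm (wnd _ _)]
  congr 1
  · apply Finset.sum_congr rfl
    intro a _
    have ha : (Sum.inl a : Fin m ⊕ Fin n) = Sum.inr b ∨
        (graphJoin (cycleGraph m) (cycleGraph n)).Adj (.inr b) (.inl a) := Or.inr trivial
    rw [if_pos ha]
  · have h3 : ∀ u : Fin n, ((Sum.inr u : Fin m ⊕ Fin n) = Sum.inr b ∨
          (graphJoin (cycleGraph m) (cycleGraph n)).Adj (.inr b) (.inr u))
        ↔ (u = b ∨ (cycleGraph n).Adj b u) := by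
      intro u
      constructor
      · rintro (h | h)
        · exact Or.inl (Sum.inr_injective h)
        · exact Or.inr h
      · rintro (h | h)
        · exact Or.inl (by rw [h])
        · exact Or.inr h
    rw [← sum_three n hn (fun i => f (.inr i)) b, ← cycle_filter n hn b, Finset.sum_filter]
    apply Finset.sum_congr rfl; intro u _; simp only [h3 u]

theorem sum_wnd (m : ℕ) [NeZero m] (g : Fin m → ℤ) :
    ∑ a, wnd g a = 3 * ∑ i, g i := by
  unfold wnd
  have h1 : ∑ x : Fin m, g (x - 1) = ∑ x, g x :=
    Fintype.sum_equiv (Equiv.subRight (1 : Fin m)) _ _ (fun x => rfl)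
  have h2 : ∑ x : Fin m, g (x + 1) = ∑ x, g x :=
    Fintype.sum_equiv (Equiv.addRight (1 : Fin m)) _ _ (fun x => rfl)
  rw [Finset.sum_add_distrib, Finset.sum_add_distrib, h1, h2]
  ring


def patN (w1 : Bool) (r : ℕ) (i : ℕ) : ℤ :=
  if i % 3 = 0 then (if w1 = true ∧ i = 3 then 1 else 2)
  else if r = 0 ∧ i = 1 then 1 else -1

theorem pat_mem (w1 : Bool) (r i : ℕ) : patN w1 r i = -1 ∨ patN w1 r i = 1 ∨ patN w1 r i = 2 := by
  unfold patN; split_ifs <;> simp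

theorem pat_ge (w1 : Bool) (r i : ℕ) : -1 ≤ patN w1 r i := by
  unfold patN; split_ifs <;> norm_num

theorem pat_zero (w1 : Bool) (r : ℕ) : patN w1 r 0 = 2 := by
  unfold patN; norm_num

theorem pat_pos0 (w1 : Bool) (r i : ℕ) (h : i % 3 = 0) : 1 ≤ patN w1 r i := by
  unfold patN; split_ifs <;> omega

theorem pat_two0 (r i : ℕ) (h : i % 3 = 0) : patN false r i = 2 := by
  unfold patN; rw [if_pos h]; simp

theorem pat_block (w1 : Bool) (r : ℕ) (k : ℕ) (h4 : 4 ≤ k) :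
    patN w1 r k + patN w1 r (k+1) + patN w1 r (k+2) = 0 := by
  unfold patN; split_ifs <;> omega

theorem pat_sum (w1 : Bool) (r : ℕ) (m : ℕ) (h13 : 13 ≤ m) (hr : m % 3 = r) (h2 : r ≠ 2) :
    ∑ i ∈ Finset.range m, patN w1 r i = if w1 then 1 else 2 := by
  induction m using Nat.strong_induction_on with
  | _ m ih =>
    rcases le_or_gt m 15 with h | h
    · interval_cases m
      · subst hr; cases w1 <;> decide
      · omega
      · subst hr; cases w1 <;> decide
    · have hih := ih (m - 3) (by omega) (by omega) (by omega)
      have hb := pat_block w1 r (m - 3) (by omega)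
      rw [show m = (m - 3) + 3 by omega, Finset.sum_range_succ, Finset.sum_range_succ,
        Finset.sum_range_succ, hih]
      rw [show m - 3 + 1 + 1 = m - 3 + 2 by omega]
      linarith

theorem fin_add_one_val (m : ℕ) [NeZero m] (hm : 13 ≤ m) (a : Fin m) :
    (a + 1).val = (a.val + 1) % m := by
  rw [Fin.add_def, Fin.val_one' m, Nat.mod_eq_of_lt (show 1 < m by omega)]

theorem fin_sub_one_val (m : ℕ) [NeZero m] (hm : 13 ≤ m) (a : Fin m) :
    (a - 1).val = (a.val + (m - 1)) % m := by
  rw [Fin.sub_def, Fin.val_one' m, Nat.mod_eq_of_lt (show 1 < m by omega)]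
  simp [Nat.add_comm]

theorem pat_wnd (w1 : Bool) (r : ℕ) (m : ℕ) [NeZero m] (h13 : 13 ≤ m) (a : Fin m) :
    (if w1 then (-1:ℤ) else 0) ≤
      patN w1 r (a-1).val + patN w1 r a.val + patN w1 r (a+1).val := by
  have hxm : a.val < m := a.isLt
  have g1 := pat_ge w1 r (a-1).val
  have g2 := pat_ge w1 r a.val
  have g3 := pat_ge w1 r (a+1).val
  rcases (show a.val = 0 ∨ a.val = m - 1 ∨ (0 < a.val ∧ a.val < m - 1) by omega)
    with hx | hx | ⟨hx1, hx2⟩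
  · have h0 : patN w1 r a.val = 2 := by rw [hx]; exact pat_zero w1 r
    cases w1 <;> simp only [if_true, if_false, Bool.false_eq_true] <;> linarith
  · have hv : (a + 1).val = 0 := by
      rw [fin_add_one_val m h13 a, hx, show m - 1 + 1 = m by omega, Nat.mod_self]
    have h0 : patN w1 r (a+1).val = 2 := by rw [hv]; exact pat_zero w1 r
    cases w1 <;> simp only [if_true, if_false, Bool.false_eq_true] <;> linarith
  · have h1 : (a - 1).val = a.val - 1 := by
      rw [fin_sub_one_val m h13 a, show a.val + (m - 1) = (a.val - 1) + m by omega,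
        Nat.add_mod_right, Nat.mod_eq_of_lt (by omega)]
    have h2 : (a + 1).val = a.val + 1 := by
      rw [fin_add_one_val m h13 a, Nat.mod_eq_of_lt (by omega)]
    rcases (show (a.val - 1) % 3 = 0 ∨ a.val % 3 = 0 ∨ (a.val + 1) % 3 = 0 by omega)
      with h | h | h
    · cases w1
      · have := pat_two0 r (a.val - 1) h
        simp only [Bool.false_eq_true, if_false]
        rw [h1]; linarith
      · have := pat_pos0 true r (a.val - 1) h
        simp only [if_true]
        rw [h1]; linarith
    · cases w1
      · have := pat_two0 r a.val h
        simp only [Bool.false_eq_true, if_false]; linarith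
      · have := pat_pos0 true r a.val h
        simp only [if_true]; linarith
    · cases w1
      · have := pat_two0 r (a.val + 1) h
        simp only [Bool.false_eq_true, if_false]
        rw [h2]; linarith
      · have := pat_pos0 true r (a.val + 1) h
        simp only [if_true]
        rw [h2]; linarith

theorem fin_ne_of_diff (m : ℕ) [NeZero m] (hm : 13 ≤ m) (x y : Fin m) (k : ℕ)
    (h1 : 0 < k) (h2 : k ≤ 5) (hd : y - x = (k : Fin m)) : x ≠ y := by
  intro h
  exact fin_cast_ne m hm k h2 h1 (by rw [← hd, h, sub_self])

theorem wnd_eq_sum_three (m : ℕ) [NeZero m] (hm : 13 ≤ m) (g : Fin m → ℤ) (a : Fin m) :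
    wnd g a = ∑ u ∈ ({a-1, a, a+1} : Finset (Fin m)), g u := (sum_three m hm g a).symm

theorem cycle_lemma (m : ℕ) [NeZero m] (h13 : 13 ≤ m) (hm3 : m % 3 ≠ 2) (g : Fin m → ℤ)
    (hv : ∀ i, g i = -1 ∨ g i = 1 ∨ g i = 2)
    (hw : ∀ a, 0 ≤ wnd g a) (hT : ∑ i, g i = 1) : False := by
  classical
  set u1 : Fin m → ℤ := fun i => if g i = 1 then 1 else 0 with hu1def
  set u2 : Fin m → ℤ := fun i => if g i = 2 then 1 else 0 with hu2def
  have hgid : ∀ i, g i = 3 * u2 i + 2 * u1 i - 1 := by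
    intro i; rcases hv i with h | h | h <;> simp [u1, u2, h]
  have hsid : ∀ a, wnd g a = 3 * wnd u2 a + 2 * wnd u1 a - 3 := by
    intro a
    unfold wnd
    rw [hgid (a-1), hgid a, hgid (a+1)]
    ring
  have hu1b : ∀ i, 0 ≤ u1 i ∧ u1 i ≤ 1 := by
    intro i; by_cases h : g i = 1 <;> simp [u1, h]
  have hu2b : ∀ i, 0 ≤ u2 i ∧ u2 i ≤ 1 := by
    intro i; by_cases h : g i = 2 <;> simp [u2, h]
  have hwu1 : ∀ a, 0 ≤ wnd u1 a ∧ wnd u1 a ≤ 3 := by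
    intro a
    have b1 := hu1b (a-1); have b2 := hu1b a; have b3 := hu1b (a+1)
    unfold wnd; constructor <;> linarith [b1.1, b1.2, b2.1, b2.2, b3.1, b3.2]
  have hwu2 : ∀ a, 0 ≤ wnd u2 a ∧ wnd u2 a ≤ 3 := by
    intro a
    have b1 := hu2b (a-1); have b2 := hu2b a; have b3 := hu2b (a+1)
    unfold wnd; constructor <;> linarith [b1.1, b1.2, b2.1, b2.2, b3.1, b3.2]
  have hsum_s : ∑ a, wnd g a = 3 := by rw [sum_wnd, hT]; ring
  set N : Finset (Fin m) := univ.filter (fun a => wnd g a ≠ 0) with hNdef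
  have hsum_sN : ∑ a ∈ N, wnd g a = 3 := by
    rw [hNdef, Finset.sum_filter_ne_zero, hsum_s]
  have hNmem : ∀ a, a ∈ N ↔ wnd g a ≠ 0 := by intro a; simp [hNdef]
  have hN1 : ∀ a ∈ N, 1 ≤ wnd g a := by
    intro a ha
    have h1 := hw a
    have h2 := (hNmem a).mp ha
    omega
  have hcardN : (N.card : ℤ) ≤ 3 := by
    calc (N.card : ℤ) = ∑ _a ∈ N, (1:ℤ) := by simp
      _ ≤ ∑ a ∈ N, wnd g a := Finset.sum_le_sum hN1
      _ = 3 := hsum_sN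
  have hzero : ∀ a, a ∉ N → wnd u1 a = 0 ∧ wnd u2 a = 1 := by
    intro a ha
    have h0 : wnd g a = 0 := by
      by_contra h
      exact ha ((hNmem a).mpr h)
    have h1 := hsid a
    have b1 := hwu1 a; have b2 := hwu2 a
    omega
  set q : ℤ := ∑ i, u1 i with hqdef
  have hq0 : 0 ≤ q := Finset.sum_nonneg (fun i _ => (hu1b i).1)
  have h3q : 3 * q = ∑ a ∈ N, wnd u1 a := by
    rw [hqdef, ← sum_wnd]
    exact (Finset.sum_subset (Finset.subset_univ N)
      (fun x _ hx => (hzero x hx).1)).symm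
  have hqle : q ≤ 3 := by
    have : ∑ a ∈ N, wnd u1 a ≤ ∑ _a ∈ N, (3:ℤ) :=
      Finset.sum_le_sum (fun a _ => (hwu1 a).2)
    rw [Finset.sum_const] at this
    have : 3 * q ≤ 3 * N.card := by
      rw [h3q]; simpa [mul_comm] using this
    omega
  set r : ℤ := ∑ i, u2 i with hrdef
  have h3r : 3 * r = ∑ a ∈ N, wnd u2 a + ((m : ℤ) - N.card) := by
    have hsplit := Finset.sum_filter_add_sum_filter_not univ
      (fun a => wnd g a ≠ 0) (wnd u2)
    have hone : ∑ a ∈ univ.filter (fun a => ¬ wnd g a ≠ 0), wnd u2 a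
        = ((univ.filter (fun a => ¬ wnd g a ≠ 0)).card : ℤ) := by
      rw [Finset.sum_congr rfl (fun a ha => by
        have : a ∉ N := by
          simp only [hNdef, mem_filter, mem_univ, true_and]
          simp only [mem_filter, mem_univ, true_and, not_not] at ha
          simp [ha]
        exact (hzero a this).2)]
      simp
    have hcards : N.card + (univ.filter (fun a => ¬ wnd g a ≠ 0)).card = m := by
      rw [hNdef, Finset.card_filter_add_card_filter_not]
      simp
    rw [hrdef, ← sum_wnd]
    rw [← hsplit, hone]
    push_cast
    have : ((univ.filter (fun a => ¬ wnd g a ≠ 0)).card : ℤ) = (m : ℤ) - N.card := by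
      have := hcards
      push_cast [← this]
      ring
    rw [this]
  have hNbal : 3 = 3 * ∑ a ∈ N, wnd u2 a + 2 * (3 * q) - 3 * N.card := by
    have h2 : ∑ a ∈ N, (3 * wnd u2 a + 2 * wnd u1 a - 3)
        = 3 * ∑ a ∈ N, wnd u2 a + 2 * (3 * q) - 3 * N.card := by
      rw [Finset.sum_sub_distrib, Finset.sum_add_distrib, ← Finset.mul_sum,
        ← Finset.mul_sum, Finset.sum_const, ← h3q]
      push_cast
      ring
    calc (3:ℤ) = ∑ a ∈ N, wnd g a := hsum_sN.symm
      _ = ∑ a ∈ N, (3 * wnd u2 a + 2 * wnd u1 a - 3) :=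
          Finset.sum_congr rfl (fun a _ => hsid a)
      _ = _ := h2
  have hkey : 3 * r = (m : ℤ) + 1 - 2 * q := by linarith
  -- q = 1 or q = 2
  have hq12 : q = 1 ∨ q = 2 := by omega
  -- there is j with g j = 1
  have hexj : ∃ j, g j = 1 := by
    by_contra h
    push_neg at h
    have : q = 0 := by
      rw [hqdef]
      exact Finset.sum_eq_zero (fun i _ => by simp [u1, h i])
    omega
  obtain ⟨j, hj⟩ := hexj
  have hwin1 : ∀ j₀ : Fin m, g j₀ = 1 →
      ∀ a ∈ ({j₀-1, j₀, j₀+1} : Finset (Fin m)), 1 ≤ wnd u1 a := by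
    intro j₀ hj₀ a ha
    simp only [mem_insert, mem_singleton] at ha
    rcases ha with h | h | h
    · have e : a + 1 = j₀ := by rw [h]; abel
      have b1 := (hu1b (a-1)).1; have b2 := (hu1b a).1
      have : u1 (a+1) = 1 := by rw [e]; simp [u1, hj₀]
      unfold wnd; linarith
    · have : u1 a = 1 := by rw [h]; simp [u1, hj₀]
      have b1 := (hu1b (a-1)).1; have b3 := (hu1b (a+1)).1
      unfold wnd; linarith
    · have e : a - 1 = j₀ := by rw [h]; abel
      have b2 := (hu1b a).1; have b3 := (hu1b (a+1)).1
      have : u1 (a-1) = 1 := by rw [e]; simp [u1, hj₀]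
      unfold wnd; linarith
  have hsubN : ∀ j₀ : Fin m, g j₀ = 1 → ({j₀-1, j₀, j₀+1} : Finset (Fin m)) ⊆ N := by
    intro j₀ hj₀ a ha
    rw [hNmem a]
    intro h0
    have h1 := hsid a
    have h2 := hwin1 j₀ hj₀ a ha
    have b2 := hwu2 a
    have b1 := hwu1 a
    omega
  have hcard3 : ∀ j₀ : Fin m, ({j₀-1, j₀, j₀+1} : Finset (Fin m)).card = 3 := by
    intro j₀
    rw [Finset.card_insert_of_notMem (by
      simp only [mem_insert, mem_singleton]
      push_neg
      exact ⟨fin_sub_ne_self m h13 j₀, fin_sub_ne_add m h13 j₀⟩),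
      Finset.card_insert_of_notMem (by simp [fin_self_ne_add m h13 j₀])]
    simp
  have hNcard3 : N.card = 3 := by
    have h1 : 3 ≤ N.card := hcard3 j ▸ Finset.card_le_card (hsubN j hj)
    omega
  have hNeqgen : ∀ j₀ : Fin m, g j₀ = 1 → N = ({j₀-1, j₀, j₀+1} : Finset (Fin m)) := by
    intro j₀ hj₀
    exact (Finset.eq_of_subset_of_card_le (hsubN j₀ hj₀) (by rw [hcard3 j₀, hNcard3])).symm
  have hNeq := hNeqgen j hj
  -- bound wnd u1 a ≤ q
  have hwu1q : ∀ a, wnd u1 a ≤ q := by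
    intro a
    rw [wnd_eq_sum_three m h13 u1 a, hqdef]
    exact Finset.sum_le_sum_of_subset_of_nonneg (Finset.subset_univ _)
      (fun i _ _ => (hu1b i).1)
  rcases hq12 with hq | hq
  · -- q = 1 : every a in N has wnd u2 a ≥ 1, so sum ≥ 3, but sum = 2
    have hge : ∀ a ∈ N, 1 ≤ wnd u2 a := by
      intro a ha
      have h1 := hN1 a ha
      have h2 := hsid a
      have h3 := hwu1q a
      omega
    have hsumge : 3 ≤ ∑ a ∈ N, wnd u2 a := by
      calc (3:ℤ) = ∑ _a ∈ N, (1:ℤ) := by rw [Finset.sum_const, hNcard3]; simp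
        _ ≤ ∑ a ∈ N, wnd u2 a := Finset.sum_le_sum hge
    omega
  · -- q = 2 : second j'
    have hexj' : ∃ j', g j' = 1 ∧ j' ≠ j := by
      by_contra h
      push_neg at h
      have hb : ∀ i, u1 i ≤ (if i = j then 1 else 0 : ℤ) := by
        intro i
        by_cases hgi : g i = 1
        · rw [h i hgi]
          simp [u1, hj]
        · simp only [u1, if_neg hgi]
          split <;> norm_num
      have : q ≤ 1 := by
        rw [hqdef]
        calc ∑ i, u1 i ≤ ∑ i, (if i = j then 1 else 0 : ℤ) :=
            Finset.sum_le_sum (fun i _ => hb i)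
          _ = 1 := by simp
      omega
    obtain ⟨j', hj', hne⟩ := hexj'
    have hNeq' := hNeqgen j' hj'
    have hj'mem : j' ∈ ({j-1, j, j+1} : Finset (Fin m)) := by
      rw [← hNeq, hNeq']
      simp
    simp only [mem_insert, mem_singleton] at hj'mem
    rcases hj'mem with hc | hc | hc
    · -- j' = j - 1 ; then j' - 1 = j - 2 ∈ N = {j-1,j,j+1}
      have hmem2 : j' - 1 ∈ ({j-1, j, j+1} : Finset (Fin m)) := by
        rw [← hNeq, hNeq']
        simp
      subst hc
      simp only [mem_insert, mem_singleton] at hmem2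
      rcases hmem2 with hd | hd | hd
      · exact fin_ne_of_diff m h13 (j-1-1) (j-1) 1 (by norm_num) (by norm_num)
          (by push_cast; ring) hd
      · exact fin_ne_of_diff m h13 (j-1-1) j 2 (by norm_num) (by norm_num)
          (by push_cast; ring) hd
      · exact fin_ne_of_diff m h13 (j-1-1) (j+1) 3 (by norm_num) (by norm_num)
          (by push_cast; ring) hd
    · exact hne hc
    · -- j' = j + 1 ; then j' + 1 = j + 2 ∈ N = {j-1,j,j+1}
      have hmem2 : j' + 1 ∈ ({j-1, j, j+1} : Finset (Fin m)) := by
        rw [← hNeq, hNeq']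
        simp
      subst hc
      simp only [mem_insert, mem_singleton] at hmem2
      rcases hmem2 with hd | hd | hd
      · exact fin_ne_of_diff m h13 (j-1) (j+1+1) 3 (by norm_num) (by norm_num)
          (by push_cast; ring) hd.symm
      · exact fin_ne_of_diff m h13 j (j+1+1) 2 (by norm_num) (by norm_num)
          (by push_cast; ring) hd.symm
      · exact fin_ne_of_diff m h13 (j+1) (j+1+1) 1 (by norm_num) (by norm_num)
          (by push_cast; ring) hd.symm

theorem lower_bound (m n : ℕ) [NeZero m] [NeZero n] (hm : 13 ≤ m) (hn : 13 ≤ n)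
    (hm3 : m % 3 ≠ 2) (hn3 : n % 3 ≠ 2) (f : Fin m ⊕ Fin n → ℤ)
    (hf : IsSRDF (graphJoin (cycleGraph m) (cycleGraph n)) f) : 3 ≤ ∑ v, f v := by
  obtain ⟨hval, hcn, _⟩ := hf
  set g1 : Fin m → ℤ := fun a => f (.inl a) with hg1
  set g2 : Fin n → ℤ := fun b => f (.inr b) with hg2
  set A : ℤ := ∑ a, g1 a with hA
  set B : ℤ := ∑ b, g2 b with hB
  have htot : ∑ v, f v = A + B := by rw [Fintype.sum_sum_type]
  have hwm : ∀ a, 1 ≤ wnd g1 a + B := by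
    intro a
    have := hcn (.inl a)
    rwa [closedNbrSum_inl m n hm hn] at this
  have hwn : ∀ b, 1 ≤ wnd g2 b + A := by
    intro b
    have := hcn (.inr b)
    rwa [closedNbrSum_inr m n hm hn] at this
  have hsm : (m:ℤ) * (1 - B) ≤ 3 * A := by
    have h1 : ∑ _a : Fin m, (1 - B) ≤ ∑ a, wnd g1 a :=
      Finset.sum_le_sum (fun a _ => by linarith [hwm a])
    rw [Finset.sum_const, sum_wnd] at h1
    simpa [card_univ, nsmul_eq_mul] using h1
  have hsn : (n:ℤ) * (1 - A) ≤ 3 * B := by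
    have h1 : ∑ _b : Fin n, (1 - A) ≤ ∑ b, wnd g2 b :=
      Finset.sum_le_sum (fun b _ => by linarith [hwn b])
    rw [Finset.sum_const, sum_wnd] at h1
    simpa [card_univ, nsmul_eq_mul] using h1
  rw [htot]
  by_contra hlt
  push_neg at hlt
  -- A + B ≤ 2
  have hw2 : A + B ≤ 2 := by omega
  -- (m-3) A ≤ m (A+B-1), (n-3) B ≤ n (A+B-1)
  have hmA : ((m:ℤ) - 3) * A ≤ (m:ℤ) * (A + B - 1) := by nlinarith
  have hnB : ((n:ℤ) - 3) * B ≤ (n:ℤ) * (A + B - 1) := by nlinarith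
  rcases le_or_gt (A + B) 1 with hle | hgt
  · -- w ≤ 1 : A ≤ w-1 and B ≤ w-1, so w ≤ 2w-2, w ≥ 2, contra
    have hA1 : A ≤ A + B - 1 := by nlinarith
    have hB1 : B ≤ A + B - 1 := by nlinarith
    omega
  · -- A + B = 2
    have hw : A + B = 2 := by omega
    have hA1 : A ≤ 1 := by nlinarith
    have hB1 : B ≤ 1 := by nlinarith
    have hAB : A = 1 ∧ B = 1 := by omega
    -- cycle lemma on g1
    apply cycle_lemma m hm hm3 g1 (fun i => hval (.inl i))
      (fun a => by have := hwm a; have := hAB.2; omega) hAB.1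

theorem upper_bound (m n : ℕ) [NeZero m] [NeZero n] (hm : 13 ≤ m) (hn : 13 ≤ n)
    (hm3 : m % 3 ≠ 2) (hn3 : n % 3 ≠ 2) :
    ∃ f, IsSRDF (graphJoin (cycleGraph m) (cycleGraph n)) f ∧ (3:ℤ) = ∑ v, f v := by
  refine ⟨Sum.elim (fun a : Fin m => patN false (m % 3) a.val)
    (fun b : Fin n => patN true (n % 3) b.val), ⟨?_, ?_, ?_⟩, ?_⟩
  · rintro (a | b)
    · exact pat_mem false (m % 3) a.val
    · exact pat_mem true (n % 3) b.val
  · have hsum1 : ∑ b : Fin n, patN true (n % 3) b.val = 1 := by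
      rw [Fin.sum_univ_eq_sum_range (fun i => patN true (n % 3) i)]
      rw [pat_sum true (n % 3) n hn rfl hn3]
      simp
    have hsum2 : ∑ a : Fin m, patN false (m % 3) a.val = 2 := by
      rw [Fin.sum_univ_eq_sum_range (fun i => patN false (m % 3) i)]
      rw [pat_sum false (m % 3) m hm rfl hm3]
      simp
    rintro (a | b)
    · rw [closedNbrSum_inl m n hm hn]
      have h1 := pat_wnd false (m % 3) m hm a
      simp only [Bool.false_eq_true, if_false] at h1
      have h2 : wnd (fun i : Fin m => patN false (m % 3) i.val) a =
          patN false (m % 3) (a-1).val + patN false (m % 3) a.val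
            + patN false (m % 3) (a+1).val := rfl
      have h3 : (∑ b : Fin n,
          (Sum.elim (fun a : Fin m => patN false (m % 3) a.val)
            (fun b : Fin n => patN true (n % 3) b.val)) (Sum.inr b)) = 1 := by
        simpa using hsum1
      rw [h3]
      have : (0:ℤ) ≤ wnd (fun i : Fin m =>
          (Sum.elim (fun a : Fin m => patN false (m % 3) a.val)
            (fun b : Fin n => patN true (n % 3) b.val)) (Sum.inl i)) a := by
        simpa [h2] using h1
      linarith
    · rw [closedNbrSum_inr m n hm hn]
      have h1 := pat_wnd true (n % 3) n hn b
      simp only [if_true] at h1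
      have h3 : (∑ a : Fin m,
          (Sum.elim (fun a : Fin m => patN false (m % 3) a.val)
            (fun b : Fin n => patN true (n % 3) b.val)) (Sum.inl a)) = 2 := by
        simpa using hsum2
      rw [h3]
      have : (-1:ℤ) ≤ wnd (fun i : Fin n =>
          (Sum.elim (fun a : Fin m => patN false (m % 3) a.val)
            (fun b : Fin n => patN true (n % 3) b.val)) (Sum.inr i)) b := by
        simpa [wnd] using h1
      linarith
  · rintro (a | b) hv
    · refine ⟨.inr ⟨0, by omega⟩, trivial, ?_⟩
      simpa using pat_zero true (n % 3)
    · refine ⟨.inl ⟨0, by omega⟩, trivial, ?_⟩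
      simpa using pat_zero false (m % 3)
  · rw [Fintype.sum_sum_type]
    have hsum1 : ∑ b : Fin n, patN true (n % 3) b.val = 1 := by
      rw [Fin.sum_univ_eq_sum_range (fun i => patN true (n % 3) i)]
      rw [pat_sum true (n % 3) n hn rfl hn3]
      simp
    have hsum2 : ∑ a : Fin m, patN false (m % 3) a.val = 2 := by
      rw [Fin.sum_univ_eq_sum_range (fun i => patN false (m % 3) i)]
      rw [pat_sum false (m % 3) m hm rfl hm3]
      simp
    simp only [Sum.elim_inl, Sum.elim_inr]
    rw [hsum1, hsum2]
    norm_num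

theorem stmt9 (m n : ℕ) (hm : 13 ≤ m) (hn : 13 ≤ n)
    (hm3 : m % 3 ≠ 2) (hn3 : n % 3 ≠ 2) :
    gammaSR (graphJoin (cycleGraph m) (cycleGraph n)) = 3 := by
  haveI : NeZero m := ⟨by omega⟩
  haveI : NeZero n := ⟨by omega⟩
  unfold gammaSR
  have hmem : (3:ℤ) ∈ {w : ℤ | ∃ f, IsSRDF (graphJoin (cycleGraph m) (cycleGraph n)) f
      ∧ w = ∑ v, f v} := upper_bound m n hm hn hm3 hn3
  have hlb : ∀ w ∈ {w : ℤ | ∃ f, IsSRDF (graphJoin (cycleGraph m) (cycleGraph n)) f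
      ∧ w = ∑ v, f v}, (3:ℤ) ≤ w := by
    rintro w ⟨f, hf, rfl⟩
    exact lower_bound m n hm hn hm3 hn3 f hf
  exact le_antisymm (csInf_le ⟨3, hlb⟩ hmem) (le_csInf ⟨3, hmem⟩ hlb)
end

section
/- For every integer n ≥ 3 with n ≠ 4, the signed Roman domination number of the wheel Wₙ = K₁ ∨ Cₙ equals 1. -/
open Finset SimpleGraph
open scoped Classical

lemma hub_sum (n : ℕ) (f : Fin 1 ⊕ Fin n → ℤ) :
    closedNbrSum (graphJoin (⊥ : SimpleGraph (Fin 1)) (cycleGraph n)) f (Sum.inl 0)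
      = ∑ v, f v := by
  unfold closedNbrSum
  rw [Finset.sum_filter]
  apply Finset.sum_congr rfl
  rintro (a | b) -
  · rw [if_pos]; left; congr; exact Subsingleton.elim _ _
  · rw [if_pos]; right; trivial

open Fin.CommRing in
lemma cyc_sum (m : ℕ) (f : Fin 1 ⊕ Fin (m+3) → ℤ) (i : Fin (m+3)) :
    closedNbrSum (graphJoin (⊥ : SimpleGraph (Fin 1)) (cycleGraph (m+3))) f (Sum.inr i)
      = f (Sum.inl 0) + f (Sum.inr (i-1)) + f (Sum.inr i) + f (Sum.inr (i+1)) := by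
  have h2 : ((2 : Fin (m+3)) : ℕ) = 2 := by simp [Fin.val_two]
  have hone : ((1 : Fin (m+3)) : ℕ) = 1 := by simp
  have hne1 : (1 : Fin (m+3)) ≠ 0 := by
    intro h; have := congrArg Fin.val h; simp at this
  have hne2 : (2 : Fin (m+3)) ≠ 0 := by
    intro h; have := congrArg Fin.val h; rw [h2] at this; simp at this
  have e1 : i - 1 ≠ i := fun h => hne1 (by linear_combination -h)
  have e2 : i ≠ i + 1 := fun h => hne1 (by linear_combination -h)
  have e3 : i - 1 ≠ i + 1 := fun h => hne2 (by linear_combination -h)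
  unfold closedNbrSum
  rw [Finset.sum_filter]
  trans (∑ u : Fin 1 ⊕ Fin (m+3), Sum.elim (fun _ => f (Sum.inl 0))
      (fun j => if j ∈ ({i - 1, i, i + 1} : Finset (Fin (m+3))) then f (Sum.inr j) else 0) u)
  · apply Finset.sum_congr rfl
    rintro (a | j) -
    · simp only [Sum.elim_inl]
      split_ifs with h1 h2 <;>
        first
          | (congr; exact Subsingleton.elim _ _)
          | exact absurd (Or.inr trivial) (by assumption)
    · simp only [Sum.elim_inr]
      have hiff : ((Sum.inr j : Fin 1 ⊕ Fin (m+3)) = Sum.inr i ∨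
          (graphJoin (⊥ : SimpleGraph (Fin 1)) (cycleGraph (m+3))).Adj (Sum.inr i) (Sum.inr j))
          ↔ j ∈ ({i - 1, i, i + 1} : Finset (Fin (m+3))) := ?_
      · split_ifs with h1 h2 <;>
          first
            | rfl
            | exact absurd (hiff.mp (by assumption)) (by assumption)
            | exact absurd (hiff.mpr (by assumption)) (by assumption)
      have hadj : (graphJoin (⊥ : SimpleGraph (Fin 1)) (cycleGraph (m+3))).Adj (Sum.inr i) (Sum.inr j)
          ↔ (cycleGraph (m+3)).Adj i j := Iff.rfl
      rw [hadj, cycleGraph_adj']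
      simp only [Finset.mem_insert, Finset.mem_singleton, Sum.inr.injEq]
      constructor
      · rintro (h | h | h)
        · right; left; exact h
        · left
          have h' : i - j = 1 := by rw [Fin.ext_iff, hone]; exact h
          linear_combination -h'
        · right; right
          have h' : j - i = 1 := by rw [Fin.ext_iff, hone]; exact h
          linear_combination h'
      · rintro (h | h | h)
        · right; left
          rw [h]
          have h5 : i - (i - 1) = 1 := by ring
          rw [h5, hone]
        · left; exact h
        · right; right
          rw [h]
          have h5 : i + 1 - i = 1 := by ring
          rw [h5, hone]
  · rw [Fintype.sum_sum_type, Fin.sum_univ_one]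
    simp only [Sum.elim_inl, Sum.elim_inr]
    rw [Finset.sum_ite_mem, Finset.univ_inter,
      Finset.sum_insert (by simp [e1, e3]), Finset.sum_insert (by simp [e2]),
      Finset.sum_singleton]
    ring

lemma nbr_vals (m : ℕ) (i : Fin (m+3)) :
    ((i-1).val = i.val - 1 ∧ 1 ≤ i.val ∨ (i.val = 0 ∧ (i-1).val = m+2)) ∧
    ((i+1).val = i.val + 1 ∧ i.val < m+2 ∨ (i.val = m+2 ∧ (i+1).val = 0)) := by
  have hi := i.isLt
  have hone : ((1 : Fin (m+3)) : ℕ) = 1 := by simp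
  have hadd : (i + 1).val = (i.val + 1) % (m+3) := by rw [Fin.add_def, hone]
  have hsub : (i - 1).val = (m + 2 + i.val) % (m+3) := by
    rw [Fin.sub_def]; simp
  constructor
  · rcases Nat.eq_zero_or_pos i.val with h0 | h0
    · right
      refine ⟨h0, ?_⟩
      rw [hsub, h0, Nat.add_zero, Nat.mod_eq_of_lt (by omega)]
    · left
      refine ⟨?_, h0⟩
      rw [hsub]
      have h5 : m + 2 + i.val = (m+3) + (i.val - 1) := by omega
      rw [h5, Nat.add_mod_left, Nat.mod_eq_of_lt (by omega)]
  · rcases Nat.lt_or_ge i.val (m+2) with h0 | h0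
    · left
      refine ⟨?_, by omega⟩
      rw [hadd, Nat.mod_eq_of_lt (by omega)]
    · right
      have hv : i.val = m + 2 := by omega
      refine ⟨by omega, ?_⟩
      rw [hadd, hv]
      simp

/-- Build the weight-1 membership from a suitable cycle labeling. -/
lemma one_mem (m : ℕ) (g : Fin (m+3) → ℤ)
    (hvals : ∀ i, g i = -1 ∨ g i = 1 ∨ g i = 2)
    (hsum : ∑ i, g i = -1)
    (htriple : ∀ i : Fin (m+3), -1 ≤ g (i-1) + g i + g (i+1)) :
    (1 : ℤ) ∈ {w : ℤ | ∃ f, IsSRDF (graphJoin (⊥ : SimpleGraph (Fin 1)) (cycleGraph (m+3))) f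
      ∧ w = ∑ v, f v} := by
  set G := graphJoin (⊥ : SimpleGraph (Fin 1)) (cycleGraph (m+3)) with hG
  set f : Fin 1 ⊕ Fin (m+3) → ℤ := Sum.elim (fun _ => 2) g with hf
  have htot : ∑ v, f v = 1 := by
    rw [Fintype.sum_sum_type, Fin.sum_univ_one]
    simp only [hf, Sum.elim_inl, Sum.elim_inr]
    rw [hsum]; ring
  refine ⟨f, ⟨?_, ?_, ?_⟩, htot.symm⟩
  · rintro (a | i)
    · right; right; rfl
    · exact hvals i
  · rintro (a | i)
    · have ha : a = 0 := Subsingleton.elim _ _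
      rw [ha, hub_sum, htot]
    · rw [cyc_sum]
      have := htriple i
      simp only [hf, Sum.elim_inl, Sum.elim_inr]
      linarith
  · rintro (a | i) hv
    · simp [hf] at hv
    · exact ⟨Sum.inl 0, trivial, rfl⟩

lemma odd_sum : ∀ k : ℕ, ∑ j ∈ Finset.range (2*k+3), (if j % 2 = 0 then (-1:ℤ) else 1) = -1 := by
  intro k
  induction k with
  | zero =>
    norm_num [Finset.sum_range_succ]
  | succ k ih =>
    have h5 : 2*(k+1)+3 = (2*k+3)+1+1 := by ring
    rw [h5, Finset.sum_range_succ, Finset.sum_range_succ, ih,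
      if_neg (by omega), if_pos (by omega)]
    ring

def gE (j : ℕ) : ℤ :=
  if j = 0 then 2 else if j = 3 then 1 else if j < 6 then -1 else if j % 2 = 0 then 1 else -1

lemma even_sum : ∀ k : ℕ, ∑ j ∈ Finset.range (2*k+6), gE j = -1 := by
  intro k
  induction k with
  | zero =>
    norm_num [Finset.sum_range_succ, gE]
  | succ k ih =>
    have h5 : 2*(k+1)+6 = (2*k+6)+1+1 := by ring
    have hv1 : gE (2*k+6) = 1 := by
      unfold gE
      rw [if_neg (by omega), if_neg (by omega), if_neg (by omega), if_pos (by omega)]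
    have hv2 : gE (2*k+6+1) = -1 := by
      unfold gE
      rw [if_neg (by omega), if_neg (by omega), if_neg (by omega), if_neg (by omega)]
    rw [h5, Finset.sum_range_succ, Finset.sum_range_succ, ih, hv1, hv2]
    ring

set_option maxHeartbeats 2000000 in
theorem stmt11 (n : ℕ) (hn : 3 ≤ n) (hn4 : n ≠ 4) :
    gammaSR (graphJoin (⊥ : SimpleGraph (Fin 1)) (cycleGraph n)) = 1 := by
  obtain ⟨m, rfl⟩ : ∃ m, n = m + 3 := ⟨n - 3, by omega⟩
  have hlb : ∀ w ∈ {w : ℤ | ∃ f, IsSRDF (graphJoin (⊥ : SimpleGraph (Fin 1))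
      (cycleGraph (m+3))) f ∧ w = ∑ v, f v}, (1:ℤ) ≤ w := by
    rintro w ⟨f, hf, rfl⟩
    rw [← hub_sum]
    exact hf.2.1 _
  have h1 : (1:ℤ) ∈ {w : ℤ | ∃ f, IsSRDF (graphJoin (⊥ : SimpleGraph (Fin 1))
      (cycleGraph (m+3))) f ∧ w = ∑ v, f v} := by
    rcases Nat.even_or_odd m with ⟨k, hk⟩ | ⟨k, hk⟩
    · -- m = k + k, n odd
      subst hk
      apply one_mem (k+k) (fun x => if x.val % 2 = 0 then (-1:ℤ) else 1)
      · intro i; split_ifs <;> simp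
      · rw [Fin.sum_univ_eq_sum_range (fun j => if j % 2 = 0 then (-1:ℤ) else 1) (k+k+3)]
        have h5 : k+k+3 = 2*k+3 := by ring
        rw [h5]
        exact odd_sum k
      · intro i
        have hnv := nbr_vals (k+k) i
        have hi := i.isLt
        split_ifs <;> omega
    · -- m odd, so m = 2k'+3 since n ≠ 4
      obtain ⟨k', rfl⟩ : ∃ k', m = 2*k' + 3 := ⟨k - 1, by omega⟩
      apply one_mem (2*k'+3) (fun x => gE x.val)
      · intro i; simp only [gE]; split_ifs <;> simp
      · rw [Fin.sum_univ_eq_sum_range (fun j => gE j) (2*k'+3+3)]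
        have h5 : 2*k'+3+3 = 2*k'+6 := by ring
        rw [h5]
        exact even_sum k'
      · intro i
        have hnv := nbr_vals (2*k'+3) i
        have hi := i.isLt
        simp only [gE]
        split_ifs <;> omega
  unfold gammaSR
  exact le_antisymm (csInf_le ⟨1, fun w hw => hlb w hw⟩ h1) (le_csInf ⟨1, h1⟩ hlb)
end

section
/- The signed Roman domination number of the fan Fₙ = K₁ ∨ Pₙ equals 2 when n ∈ {2,4}, and equals 1 for every integer n ≥ 1 with n ∉ {2,4}. -/
open Finset SimpleGraph
open scoped Classical

namespace SRDaux

/-- The sum of `f` over the closed neighborhood of the hub is the total weight. -/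
lemma hub_sum (n : ℕ) (f : Fin 1 ⊕ Fin n → ℤ) :
    closedNbrSum (graphJoin (⊥ : SimpleGraph (Fin 1)) (pathGraph n)) f (Sum.inl 0) = ∑ v, f v := by
  unfold closedNbrSum
  rw [Finset.sum_filter]
  apply Finset.sum_congr rfl
  rintro (a | j) -
  · rw [if_pos (Or.inl (congrArg Sum.inl (Subsingleton.elim a 0)))]
  · rw [if_pos (Or.inr (show (graphJoin (⊥ : SimpleGraph (Fin 1)) (pathGraph n)).Adj
      (Sum.inl 0) (Sum.inr j) from trivial))]

lemma range_window (g : ℕ → ℤ) (n i : ℕ) (hi : i < n) :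
    ∑ k ∈ Finset.range n, (if (k = i ∨ k + 1 = i ∨ i + 1 = k) then g k else 0)
      = (if 1 ≤ i then g (i - 1) else 0) + g i + (if i + 1 < n then g (i + 1) else 0) := by
  have split : ∀ k ∈ Finset.range n, (if (k = i ∨ k + 1 = i ∨ i + 1 = k) then g k else 0)
      = (if k + 1 = i then g k else 0) + (if k = i then g k else 0)
        + (if i + 1 = k then g k else 0) := by
    intro k _
    split_ifs <;> omega
  rw [Finset.sum_congr rfl split]
  rw [Finset.sum_add_distrib, Finset.sum_add_distrib]
  congr 1
  · congr 1
    · -- left neighbor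
      rcases i with - | m
      · simp
      · have : ∀ k, (k + 1 = m + 1) = (k = m) := by intro k; simp
        simp only [this]
        rw [Finset.sum_ite_eq' (Finset.range n) m g, if_pos (by simp; omega)]
        simp
    · rw [Finset.sum_ite_eq' (Finset.range n) i g, if_pos (by simpa using hi)]
  · have : ∀ k, (i + 1 = k) = (k = i + 1) := by intro k; simp [eq_comm]
    simp only [this]
    rw [Finset.sum_ite_eq' (Finset.range n) (i + 1) g]
    simp [Finset.mem_range]

/-- Closed neighborhood sum at a path vertex of the fan. -/
lemma nbr_sum (n : ℕ) (f : Fin 1 ⊕ Fin n → ℤ) (g : ℕ → ℤ)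
    (hg : ∀ j : Fin n, g j.val = f (Sum.inr j)) (i : Fin n) :
    closedNbrSum (graphJoin (⊥ : SimpleGraph (Fin 1)) (pathGraph n)) f (Sum.inr i)
      = f (Sum.inl 0) + ((if 1 ≤ (i : ℕ) then g ((i : ℕ) - 1) else 0) + g i
          + (if (i : ℕ) + 1 < n then g ((i : ℕ) + 1) else 0)) := by
  unfold closedNbrSum
  rw [Finset.sum_filter, Fintype.sum_sum_type]
  have hL : ∀ a : Fin 1, (Sum.inl a = Sum.inr i ∨
      (graphJoin (⊥ : SimpleGraph (Fin 1)) (pathGraph n)).Adj (Sum.inr i) (Sum.inl a)) ↔ True :=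
    fun a => iff_true_intro (Or.inr trivial)
  have hR : ∀ j : Fin n, ((Sum.inr j : Fin 1 ⊕ Fin n) = Sum.inr i ∨
      (graphJoin (⊥ : SimpleGraph (Fin 1)) (pathGraph n)).Adj (Sum.inr i) (Sum.inr j)) ↔
      ((j : ℕ) = (i : ℕ) ∨ (j : ℕ) + 1 = (i : ℕ) ∨ (i : ℕ) + 1 = (j : ℕ)) := by
    intro j
    rw [show ((graphJoin (⊥ : SimpleGraph (Fin 1)) (pathGraph n)).Adj (Sum.inr i) (Sum.inr j))
      ↔ (pathGraph n).Adj i j from Iff.rfl, pathGraph_adj, Sum.inr.injEq, Fin.ext_iff]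
    tauto
  simp only [hL, hR, if_true]
  simp only [← hg]
  rw [Fin.sum_univ_one,
    Fin.sum_univ_eq_sum_range
      (fun k => if (k = (i : ℕ) ∨ k + 1 = (i : ℕ) ∨ (i : ℕ) + 1 = k) then g k else 0),
    range_window g n i i.isLt]

/-- Total weight of an `f` on the fan. -/
lemma total_sum (n : ℕ) (f : Fin 1 ⊕ Fin n → ℤ) (g : ℕ → ℤ)
    (hg : ∀ j : Fin n, g j.val = f (Sum.inr j)) :
    ∑ v, f v = f (Sum.inl 0) + ∑ k ∈ Finset.range n, g k := by
  rw [Fintype.sum_sum_type]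
  congr 1
  · simp
  · rw [← Fin.sum_univ_eq_sum_range g]
    exact Finset.sum_congr rfl fun j _ => (hg j).symm

/-! ### Labelling patterns -/

def Fodd (j : ℕ) : ℤ := if j % 2 = 0 then -1 else 1

def Fev (n j : ℕ) : ℤ := if j = n - 2 then 2 else if j = n - 1 ∨ j = n - 3 then -1 else Fodd j

def F2 (j : ℕ) : ℤ := if j = 0 then -1 else 1

def F4 (j : ℕ) : ℤ := if j = 0 ∨ j = 3 then -1 else 1

lemma Fodd_mem (j : ℕ) : Fodd j = -1 ∨ Fodd j = 1 := by
  unfold Fodd; split_ifs <;> simp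

lemma Fodd_pair (j : ℕ) : Fodd j + Fodd (j + 1) = 0 := by
  unfold Fodd; split_ifs <;> omega

lemma Fodd_zero : Fodd 0 = -1 := by unfold Fodd; rw [if_pos (by omega)]

lemma Fodd_one : Fodd 1 = 1 := by unfold Fodd; rw [if_neg (by omega)]

lemma odd_window (n i : ℕ) (hi : i < n) :
    -1 ≤ (if 1 ≤ i then Fodd (i - 1) else 0) + Fodd i + (if i + 1 < n then Fodd (i + 1) else 0) := by
  rcases i with - | k
  · have h1 := Fodd_pair 0
    have h0 := Fodd_zero
    split_ifs <;> omega
  · rw [if_pos (by omega), Nat.add_sub_cancel]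
    have h1 := Fodd_pair k
    have h2 := Fodd_mem (k + 1 + 1)
    split_ifs <;> omega

lemma sum_Fodd_even (m : ℕ) : ∑ k ∈ Finset.range (2 * m), Fodd k = 0 := by
  induction m with
  | zero => simp
  | succ p ih =>
      rw [show 2 * (p + 1) = 2 * p + 1 + 1 by ring, Finset.sum_range_succ,
        Finset.sum_range_succ, ih]
      have := Fodd_pair (2 * p)
      omega

lemma sum_Fodd_odd (m : ℕ) : ∑ k ∈ Finset.range (2 * m + 1), Fodd k = -1 := by
  rw [Finset.sum_range_succ, sum_Fodd_even]
  have : Fodd (2 * m) = -1 := by unfold Fodd; rw [if_pos (by omega)]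
  omega

lemma Fev_mem (n j : ℕ) : Fev n j = -1 ∨ Fev n j = 1 ∨ Fev n j = 2 := by
  unfold Fev
  split_ifs
  · exact Or.inr (Or.inr rfl)
  · exact Or.inl rfl
  · exact (Fodd_mem j).imp id Or.inl

lemma Fev_alt (n j : ℕ) (h1 : j ≠ n - 1) (h2 : j ≠ n - 2) (h3 : j ≠ n - 3) :
    Fev n j = Fodd j := by
  unfold Fev; rw [if_neg h2, if_neg (by tauto)]

lemma even_window (n i : ℕ) (hn : 6 ≤ n) (he : n % 2 = 0) (hi : i < n) :
    -1 ≤ (if 1 ≤ i then Fev n (i - 1) else 0) + Fev n i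
      + (if i + 1 < n then Fev n (i + 1) else 0) := by
  by_cases hreg : i + 1 ≤ n - 4
  · rw [Fev_alt n i (by omega) (by omega) (by omega)]
    rcases i with - | k
    · rw [if_neg (by omega), if_pos (by omega), Fev_alt n 1 (by omega) (by omega) (by omega)]
      have h1 := Fodd_one
      have h0 := Fodd_zero
      omega
    · rw [if_pos (by omega), if_pos (by omega), Nat.add_sub_cancel,
        Fev_alt n k (by omega) (by omega) (by omega),
        Fev_alt n (k + 1 + 1) (by omega) (by omega) (by omega)]
      have h1 := Fodd_pair k
      have h2 := Fodd_mem (k + 1 + 1)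
      omega
  · have hA : Fev n (n - 1) = -1 := by
      unfold Fev; rw [if_neg (by omega), if_pos (Or.inl rfl)]
    have hB : Fev n (n - 2) = 2 := by unfold Fev; rw [if_pos rfl]
    have hC : Fev n (n - 3) = -1 := by
      unfold Fev; rw [if_neg (by omega), if_pos (Or.inr rfl)]
    have hD : Fev n (n - 4) = -1 := by
      rw [Fev_alt n _ (by omega) (by omega) (by omega)]
      unfold Fodd; rw [if_pos (by omega)]
    have hE : Fev n (n - 5) = 1 := by
      rw [Fev_alt n _ (by omega) (by omega) (by omega)]
      unfold Fodd; rw [if_neg (by omega)]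
    have h4 : i = n - 4 ∨ i = n - 3 ∨ i = n - 2 ∨ i = n - 1 := by omega
    rcases h4 with h | h | h | h <;> subst h
    · rw [if_pos (by omega), if_pos (by omega), show n - 4 - 1 = n - 5 by omega,
        show n - 4 + 1 = n - 3 by omega]
      omega
    · rw [if_pos (by omega), if_pos (by omega), show n - 3 - 1 = n - 4 by omega,
        show n - 3 + 1 = n - 2 by omega]
      omega
    · rw [if_pos (by omega), if_pos (by omega), show n - 2 - 1 = n - 3 by omega,
        show n - 2 + 1 = n - 1 by omega]
      omega
    · rw [if_pos (by omega), if_neg (by omega), show n - 1 - 1 = n - 2 by omega]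
      omega

lemma sum4 (f : ℕ → ℤ) (n : ℕ) (h : 4 ≤ n) :
    ∑ k ∈ Finset.range n, f k
      = (∑ k ∈ Finset.range (n - 4), f k) + f (n - 4) + f (n - 3) + f (n - 2) + f (n - 1) := by
  obtain ⟨m, rfl⟩ : ∃ m, n = m + 4 := ⟨n - 4, by omega⟩
  rw [show m + 4 = m + 1 + 1 + 1 + 1 by ring, Finset.sum_range_succ, Finset.sum_range_succ,
    Finset.sum_range_succ, Finset.sum_range_succ]
  have e1 : m + 1 + 1 + 1 + 1 - 4 = m := by omega
  have e2 : m + 1 + 1 + 1 + 1 - 3 = m + 1 := by omega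
  have e3 : m + 1 + 1 + 1 + 1 - 2 = m + 1 + 1 := by omega
  have e4 : m + 1 + 1 + 1 + 1 - 1 = m + 1 + 1 + 1 := by omega
  rw [e1, e2, e3, e4]

lemma sum_Fev (n : ℕ) (hn : 6 ≤ n) (he : n % 2 = 0) :
    ∑ k ∈ Finset.range n, Fev n k = -1 := by
  rw [sum4 (Fev n) n (by omega)]
  have hreg : ∑ k ∈ Finset.range (n - 4), Fev n k = ∑ k ∈ Finset.range (n - 4), Fodd k := by
    apply Finset.sum_congr rfl
    intro k hk
    rw [Finset.mem_range] at hk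
    exact Fev_alt n k (by omega) (by omega) (by omega)
  obtain ⟨m, hm⟩ : ∃ m, n - 4 = 2 * m := ⟨(n - 4) / 2, by omega⟩
  have h0 : ∑ k ∈ Finset.range (n - 4), Fodd k = 0 := by rw [hm]; exact sum_Fodd_even m
  rw [hreg, h0]
  have hA : Fev n (n - 1) = -1 := by
    unfold Fev; rw [if_neg (by omega), if_pos (Or.inl rfl)]
  have hB : Fev n (n - 2) = 2 := by unfold Fev; rw [if_pos rfl]
  have hC : Fev n (n - 3) = -1 := by
    unfold Fev; rw [if_neg (by omega), if_pos (Or.inr rfl)]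
  have hD : Fev n (n - 4) = -1 := by
    rw [Fev_alt n _ (by omega) (by omega) (by omega)]
    unfold Fodd; rw [if_pos (by omega)]
  omega

/-! ### Building SRDFs on the fan -/

lemma constr (n : ℕ) (F : ℕ → ℤ) (hval : ∀ j, F j = -1 ∨ F j = 1 ∨ F j = 2)
    (hwin : ∀ i, i < n →
      -1 ≤ (if 1 ≤ i then F (i - 1) else 0) + F i + (if i + 1 < n then F (i + 1) else 0))
    (s : ℤ) (hsum : 2 + ∑ k ∈ Finset.range n, F k = s) (hs : 1 ≤ s) :
    s ∈ {w : ℤ | ∃ f, IsSRDF (graphJoin (⊥ : SimpleGraph (Fin 1)) (pathGraph n)) f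
      ∧ w = ∑ v, f v} := by
  set f : Fin 1 ⊕ Fin n → ℤ := Sum.elim (fun _ => 2) (fun j => F j.val) with hf
  have hg : ∀ j : Fin n, F j.val = f (Sum.inr j) := fun j => rfl
  have hf0 : f (Sum.inl 0) = 2 := rfl
  have htot : ∑ v, f v = s := by
    rw [total_sum n f F hg, hf0, hsum]
  refine ⟨f, ⟨?_, ?_, ?_⟩, htot.symm⟩
  · rintro (a | j)
    · exact Or.inr (Or.inr rfl)
    · exact hval j.val
  · rintro (a | j)
    · rw [Subsingleton.elim a 0, hub_sum, htot]
      exact hs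
    · rw [nbr_sum n f F hg j, hf0]
      have := hwin j.val j.isLt
      omega
  · rintro (a | j) hfv
    · rw [Subsingleton.elim a 0, hf0] at hfv; omega
    · exact ⟨Sum.inl 0,
        show (graphJoin (⊥ : SimpleGraph (Fin 1)) (pathGraph n)).Adj (Sum.inr j) (Sum.inl 0)
          from trivial, hf0⟩

/-! ### Lower bounds -/

lemma lb_one (n : ℕ) :
    ∀ w ∈ {w : ℤ | ∃ f, IsSRDF (graphJoin (⊥ : SimpleGraph (Fin 1)) (pathGraph n)) f
      ∧ w = ∑ v, f v}, 1 ≤ w := by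
  rintro w ⟨f, hf, rfl⟩
  have := hf.2.1 (Sum.inl 0)
  rwa [hub_sum] at this

lemma fin_val_cases {n : ℕ} (g : ℕ → ℤ) (f : Fin 1 ⊕ Fin n → ℤ)
    (hg : ∀ j : Fin n, g j.val = f (Sum.inr j)) (y : Fin n) (hy : f (Sum.inr y) = 2) :
    g (y : ℕ) = 2 := by rw [hg y]; exact hy

lemma lb_two' :
    ∀ w ∈ {w : ℤ | ∃ f, IsSRDF (graphJoin (⊥ : SimpleGraph (Fin 1)) (pathGraph 2)) f
      ∧ w = ∑ v, f v}, 2 ≤ w := by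
  rintro w ⟨f, ⟨h1, h2, h3⟩, rfl⟩
  set g : ℕ → ℤ := fun k => if h : k < 2 then f (Sum.inr ⟨k, h⟩) else 0 with hgdef
  have hg : ∀ j : Fin 2, g j.val = f (Sum.inr j) := by
    intro j
    simp only [hgdef, j.isLt, dif_pos, Fin.eta]
  have e0 : g 0 = f (Sum.inr 0) := hg 0
  have e1 : g 1 = f (Sum.inr 1) := hg 1
  have hub := h2 (Sum.inl 0)
  rw [hub_sum, total_sum 2 f g hg] at hub
  have hv0 := h2 (Sum.inr 0)
  rw [nbr_sum 2 f g hg 0] at hv0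
  have hv1 := h2 (Sum.inr 1)
  rw [nbr_sum 2 f g hg 1] at hv1
  simp only [Fin.val_zero, Fin.val_one] at hv0 hv1
  rw [if_neg (by omega), if_pos (by omega)] at hv0
  rw [if_pos (by omega), if_neg (by omega)] at hv1
  norm_num at hv0 hv1
  have hs2 : ∑ k ∈ Finset.range 2, g k = g 0 + g 1 := by
    rw [Finset.sum_range_succ, Finset.sum_range_succ, Finset.sum_range_zero]
    ring
  rw [total_sum 2 f g hg, hs2]
  rw [hs2] at hub
  have hm0 := h1 (Sum.inl 0)
  have hm1 := h1 (Sum.inr 0)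
  have hm2 := h1 (Sum.inr 1)
  by_contra hlt
  push_neg at hlt
  have hno2 : g 0 ≠ 2 ∧ g 1 ≠ 2 ∧ f (Sum.inl 0) ≠ 2 := by omega
  have key : ∀ v, ¬ ∃ u, (graphJoin (⊥ : SimpleGraph (Fin 1)) (pathGraph 2)).Adj v u
      ∧ f u = 2 := by
    rintro v ⟨u, -, hu2⟩
    rcases u with x | y
    · rw [Subsingleton.elim x 0] at hu2; omega
    · have hy := fin_val_cases g f hg y hu2
      have hlt2 := y.isLt
      have : (y : ℕ) = 0 ∨ (y : ℕ) = 1 := by omega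
      rcases this with h | h <;> rw [h] at hy <;> omega
  have hneg : g 0 = -1 ∨ g 1 = -1 ∨ f (Sum.inl 0) = -1 := by omega
  rcases hneg with h | h | h
  · exact key _ (h3 (Sum.inr 0) (by omega))
  · exact key _ (h3 (Sum.inr 1) (by omega))
  · exact key _ (h3 (Sum.inl 0) h)

lemma lb_four' :
    ∀ w ∈ {w : ℤ | ∃ f, IsSRDF (graphJoin (⊥ : SimpleGraph (Fin 1)) (pathGraph 4)) f
      ∧ w = ∑ v, f v}, 2 ≤ w := by
  rintro w ⟨f, ⟨h1, h2, h3⟩, rfl⟩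
  set g : ℕ → ℤ := fun k => if h : k < 4 then f (Sum.inr ⟨k, h⟩) else 0 with hgdef
  have hg : ∀ j : Fin 4, g j.val = f (Sum.inr j) := by
    intro j
    simp only [hgdef, j.isLt, dif_pos, Fin.eta]
  have e0 : g 0 = f (Sum.inr 0) := hg 0
  have hub := h2 (Sum.inl 0)
  rw [hub_sum, total_sum 4 f g hg] at hub
  have hv0 := h2 (Sum.inr 0)
  rw [nbr_sum 4 f g hg 0] at hv0
  have hv1 := h2 (Sum.inr 1)
  rw [nbr_sum 4 f g hg 1] at hv1
  have hv2 := h2 (Sum.inr 2)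
  rw [nbr_sum 4 f g hg 2] at hv2
  have hv3 := h2 (Sum.inr 3)
  rw [nbr_sum 4 f g hg 3] at hv3
  simp only [show ((0 : Fin 4) : ℕ) = 0 from rfl, show ((1 : Fin 4) : ℕ) = 1 from rfl,
    show ((2 : Fin 4) : ℕ) = 2 from rfl, show ((3 : Fin 4) : ℕ) = 3 from rfl]
    at hv0 hv1 hv2 hv3
  norm_num at hv0 hv1 hv2 hv3
  have hs4 : ∑ k ∈ Finset.range 4, g k = g 0 + g 1 + g 2 + g 3 := by
    rw [Finset.sum_range_succ, Finset.sum_range_succ, Finset.sum_range_succ,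
      Finset.sum_range_succ, Finset.sum_range_zero]
    ring
  rw [total_sum 4 f g hg, hs4]
  rw [hs4] at hub
  have hm0 := h1 (Sum.inl 0)
  have hm1 := h1 (Sum.inr 0)
  have hm2 := h1 (Sum.inr 1)
  have hm3 := h1 (Sum.inr 2)
  have hm4 := h1 (Sum.inr 3)
  rw [← hg 0] at hm1
  rw [← hg 1] at hm2
  rw [← hg 2] at hm3
  rw [← hg 3] at hm4
  simp only [show ((0 : Fin 4) : ℕ) = 0 from rfl, show ((1 : Fin 4) : ℕ) = 1 from rfl,
    show ((2 : Fin 4) : ℕ) = 2 from rfl, show ((3 : Fin 4) : ℕ) = 3 from rfl]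
    at hm1 hm2 hm3 hm4
  by_contra hlt
  push_neg at hlt
  have hall : f (Sum.inl 0) = 1 ∧ g 0 = -1 ∧ g 1 = 1 ∧ g 2 = 1 ∧ g 3 = -1 := by omega
  obtain ⟨u, -, hu2⟩ := h3 (Sum.inr 0) (by omega)
  rcases u with x | y
  · rw [Subsingleton.elim x 0] at hu2; omega
  · have hy := fin_val_cases g f hg y hu2
    have hlt4 := y.isLt
    have : (y : ℕ) = 0 ∨ (y : ℕ) = 1 ∨ (y : ℕ) = 2 ∨ (y : ℕ) = 3 := by omega
    rcases this with h | h | h | h <;> rw [h] at hy <;> omega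

end SRDaux


theorem stmt12 (n : ℕ) (hn : 1 ≤ n) :
    gammaSR (graphJoin (⊥ : SimpleGraph (Fin 1)) (pathGraph n)) =
      if n = 2 ∨ n = 4 then 2 else 1 := by
  by_cases hc : n = 2 ∨ n = 4
  · rw [if_pos hc]
    unfold gammaSR
    rcases hc with rfl | rfl
    · refine IsLeast.csInf_eq ⟨?_, fun b hb => SRDaux.lb_two' b hb⟩
      refine SRDaux.constr 2 SRDaux.F2 ?_ ?_ 2 ?_ (by norm_num)
      · intro j; unfold SRDaux.F2; split_ifs
        · exact Or.inl rfl
        · exact Or.inr (Or.inl rfl)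
      · intro i hi
        interval_cases i <;> norm_num [SRDaux.F2]
      · norm_num [Finset.sum_range_succ, SRDaux.F2]
    · refine IsLeast.csInf_eq ⟨?_, fun b hb => SRDaux.lb_four' b hb⟩
      refine SRDaux.constr 4 SRDaux.F4 ?_ ?_ 2 ?_ (by norm_num)
      · intro j; unfold SRDaux.F4; split_ifs
        · exact Or.inl rfl
        · exact Or.inr (Or.inl rfl)
      · intro i hi
        interval_cases i <;> norm_num [SRDaux.F4]
      · norm_num [Finset.sum_range_succ, SRDaux.F4]
  · rw [if_neg hc]
    unfold gammaSR
    refine IsLeast.csInf_eq ⟨?_, fun b hb => SRDaux.lb_one n b hb⟩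
    rcases Nat.mod_two_eq_zero_or_one n with he | ho
    · have hn6 : 6 ≤ n := by omega
      exact SRDaux.constr n (SRDaux.Fev n) (SRDaux.Fev_mem n)
        (fun i hi => SRDaux.even_window n i hn6 he hi) 1
        (by rw [SRDaux.sum_Fev n hn6 he]; ring) le_rfl
    · obtain ⟨m, rfl⟩ : ∃ m, n = 2 * m + 1 := ⟨n / 2, by omega⟩
      exact SRDaux.constr _ SRDaux.Fodd (fun j => (SRDaux.Fodd_mem j).imp id Or.inl)
        (fun i hi => SRDaux.odd_window _ i hi) 1
        (by rw [SRDaux.sum_Fodd_odd]; ring) le_rfl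
end

section
/- For every integer m ≥ 2, the friendship graph Fr_{2m+1} = K₁ ∨ (m·K₂), consisting of m triangles sharing one common vertex, has signed Roman domination number exactly 2. -/
open Finset SimpleGraph
open scoped Classical

/-- The disjoint union of `m` copies of `K₂`. -/
def mK2 (m : ℕ) : SimpleGraph (Fin m × Fin 2) where
  Adj x y := x.1 = y.1 ∧ x.2 ≠ y.2
  symm := ⟨fun x y h => ⟨h.1.symm, h.2.symm⟩⟩
  loopless := ⟨fun x h => h.2 rfl⟩

/-- The friendship graph with `m` triangles sharing a common vertex. -/
def friendshipGraph (m : ℕ) : SimpleGraph (Fin 1 ⊕ (Fin m × Fin 2)) :=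
  graphJoin (⊥ : SimpleGraph (Fin 1)) (mK2 m)


section Aux

lemma fr_adj_lr (m : ℕ) (j : Fin 1) (p : Fin m × Fin 2) :
    (friendshipGraph m).Adj (Sum.inl j) (Sum.inr p) := trivial

lemma fr_adj_rl (m : ℕ) (p : Fin m × Fin 2) (j : Fin 1) :
    (friendshipGraph m).Adj (Sum.inr p) (Sum.inl j) := trivial

lemma fr_adj_rr (m : ℕ) (x y : Fin m × Fin 2) :
    (friendshipGraph m).Adj (Sum.inr x) (Sum.inr y) ↔ x.1 = y.1 ∧ x.2 ≠ y.2 := Iff.rfl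

lemma cns_center (m : ℕ) (f : Fin 1 ⊕ (Fin m × Fin 2) → ℤ) :
    closedNbrSum (friendshipGraph m) f (Sum.inl 0) = ∑ v, f v := by
  unfold closedNbrSum
  refine Finset.sum_congr ?_ fun x _ => rfl
  ext u
  simp only [Finset.mem_filter, Finset.mem_univ, true_and, iff_true]
  rcases u with j | p
  · left; exact congrArg Sum.inl (Subsingleton.elim _ _)
  · right; exact fr_adj_lr m 0 p

lemma cns_leaf (m : ℕ) (f : Fin 1 ⊕ (Fin m × Fin 2) → ℤ) (i : Fin m) (a : Fin 2) :
    closedNbrSum (friendshipGraph m) f (Sum.inr (i, a)) =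
      f (Sum.inl 0) + f (Sum.inr (i, 0)) + f (Sum.inr (i, 1)) := by
  unfold closedNbrSum
  have ha : a = 0 ∨ a = 1 := by fin_cases a <;> [left; right] <;> rfl
  trans (∑ u ∈ ({Sum.inl 0, Sum.inr (i, 0), Sum.inr (i, 1)} :
      Finset (Fin 1 ⊕ (Fin m × Fin 2))), f u)
  · refine Finset.sum_congr ?_ fun x _ => rfl
    ext u
    simp only [Finset.mem_filter, Finset.mem_univ, true_and, Finset.mem_insert,
      Finset.mem_singleton]
    constructor
    · rintro (rfl | h)
      · rcases ha with rfl | rfl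
        · right; left; rfl
        · right; right; rfl
      · rcases u with j | ⟨j, b⟩
        · left; exact congrArg Sum.inl (Subsingleton.elim _ _)
        · obtain ⟨h1, h2⟩ := (fr_adj_rr m _ _).mp h
          simp only at h1 h2
          subst h1
          have hb : b = 0 ∨ b = 1 := by fin_cases b <;> [left; right] <;> rfl
          rcases ha with rfl | rfl <;> rcases hb with rfl | rfl <;> simp_all
    · rintro (rfl | rfl | rfl)
      · right; exact fr_adj_rl m _ _
      · rcases ha with rfl | rfl
        · left; rfl
        · right; exact (fr_adj_rr m _ _).mpr ⟨rfl, by simp⟩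
      · rcases ha with rfl | rfl
        · right; exact (fr_adj_rr m _ _).mpr ⟨rfl, by simp⟩
        · left; rfl
  · rw [Finset.sum_insert (by simp), Finset.sum_insert (by simp), Finset.sum_singleton]
    ring

lemma sum_decomp (m : ℕ) (f : Fin 1 ⊕ (Fin m × Fin 2) → ℤ) :
    ∑ v, f v = f (Sum.inl 0) + ∑ i : Fin m, (f (Sum.inr (i, 0)) + f (Sum.inr (i, 1))) := by
  rw [Fintype.sum_sum_type, Fintype.sum_prod_type]
  simp [Fin.sum_univ_two]

lemma srdf_lb_s13 (m : ℕ) (hm : 2 ≤ m) (f : Fin 1 ⊕ (Fin m × Fin 2) → ℤ)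
    (hf : IsSRDF (friendshipGraph m) f) : 2 ≤ ∑ v, f v := by
  obtain ⟨hval, hcns, hdef⟩ := hf
  have hpair : ∀ i : Fin m,
      1 ≤ f (Sum.inl 0) + f (Sum.inr (i, 0)) + f (Sum.inr (i, 1)) := by
    intro i
    have := hcns (Sum.inr (i, 0))
    rwa [cns_leaf] at this
  have hsum := sum_decomp m f
  have hdef' : ∀ (i : Fin m) (b : Fin 2), f (Sum.inr (i, b)) = -1 →
      f (Sum.inl 0) = 2 ∨ f (Sum.inr (i, 0)) = 2 ∨ f (Sum.inr (i, 1)) = 2 := by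
    intro i b hb
    obtain ⟨u, hu, hu2⟩ := hdef _ hb
    rcases u with j | ⟨j, b'⟩
    · left
      rw [show (Sum.inl 0 : Fin 1 ⊕ (Fin m × Fin 2)) = Sum.inl j from
        congrArg Sum.inl (Subsingleton.elim _ _)]
      exact hu2
    · obtain ⟨h1, _⟩ := (fr_adj_rr m _ _).mp hu
      simp only at h1
      subst h1
      fin_cases b'
      · right; left; exact hu2
      · right; right; exact hu2
  have hm' : (2 : ℤ) ≤ (m : ℤ) := by exact_mod_cast hm
  rcases hval (Sum.inl 0) with hc | hc | hc
  · -- c = -1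
    have hp : ∀ i : Fin m, (2 : ℤ) ≤ f (Sum.inr (i, 0)) + f (Sum.inr (i, 1)) := by
      intro i; have := hpair i; omega
    have hbig : (2 * (m : ℤ)) ≤ ∑ i : Fin m, (f (Sum.inr (i, 0)) + f (Sum.inr (i, 1))) := by
      calc (2 * (m : ℤ)) = ∑ _i : Fin m, (2 : ℤ) := by simp [mul_comm]
        _ ≤ _ := Finset.sum_le_sum fun i _ => hp i
    rw [hsum, hc]; linarith
  · -- c = 1
    have hp : ∀ i : Fin m, (1 : ℤ) ≤ f (Sum.inr (i, 0)) + f (Sum.inr (i, 1)) := by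
      intro i
      have h2 := hpair i
      rcases hval (Sum.inr (i, 0)) with h0 | h0 | h0 <;>
        rcases hval (Sum.inr (i, 1)) with h1 | h1 | h1 <;>
        first
          | omega
          | (exfalso; have := hdef' i 0 h0; omega)
          | (exfalso; have := hdef' i 1 h1; omega)
    have hbig : ((m : ℤ)) ≤ ∑ i : Fin m, (f (Sum.inr (i, 0)) + f (Sum.inr (i, 1))) := by
      calc ((m : ℤ)) = ∑ _i : Fin m, (1 : ℤ) := by simp
        _ ≤ _ := Finset.sum_le_sum fun i _ => hp i
    rw [hsum, hc]; linarith
  · -- c = 2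
    have hp : ∀ i : Fin m, (0 : ℤ) ≤ f (Sum.inr (i, 0)) + f (Sum.inr (i, 1)) := by
      intro i
      have h2 := hpair i
      rcases hval (Sum.inr (i, 0)) with h0 | h0 | h0 <;>
        rcases hval (Sum.inr (i, 1)) with h1 | h1 | h1 <;> omega
    have hbig : (0 : ℤ) ≤ ∑ i : Fin m, (f (Sum.inr (i, 0)) + f (Sum.inr (i, 1))) :=
      Finset.sum_nonneg fun i _ => hp i
    rw [hsum, hc]; linarith

noncomputable def goodF (m : ℕ) : Fin 1 ⊕ (Fin m × Fin 2) → ℤ :=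
  fun v => match v with
  | .inl _ => 2
  | .inr (_, b) => if b = 0 then 1 else -1

lemma goodF_srdf (m : ℕ) : IsSRDF (friendshipGraph m) (goodF m) := by
  refine ⟨?_, ?_, ?_⟩
  · rintro (j | ⟨i, b⟩)
    · right; right; rfl
    · rcases (by fin_cases b <;> [left; right] <;> rfl : b = 0 ∨ b = 1) with rfl | rfl <;> simp [goodF]
  · rintro (j | ⟨i, b⟩)
    · have hj : j = 0 := Subsingleton.elim _ _
      subst hj
      rw [cns_center, sum_decomp]
      simp [goodF]
    · have hb : (b = 0) ∨ (b = 1) := by fin_cases b <;> [left; right] <;> rfl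
      rcases hb with rfl | rfl <;>
        · rw [cns_leaf]; simp [goodF]
  · rintro (j | ⟨i, b⟩) hv
    · simp [goodF] at hv
    · exact ⟨Sum.inl 0, fr_adj_rl m _ _, rfl⟩

lemma goodF_weight (m : ℕ) : ∑ v, goodF m v = 2 := by
  rw [sum_decomp]
  simp [goodF]

end Aux

theorem stmt13 (m : ℕ) (hm : 2 ≤ m) :
    gammaSR (friendshipGraph m) = 2 := by
  have hleast : IsLeast {w : ℤ | ∃ f, IsSRDF (friendshipGraph m) f ∧ w = ∑ v, f v} 2 := by
    constructor
    · exact ⟨goodF m, goodF_srdf m, (goodF_weight m).symm⟩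
    · rintro w ⟨f, hf, rfl⟩
      exact srdf_lb_s13 m hm f hf
  rw [gammaSR]
  exact hleast.csInf_eq
end

section
/- Let m ≥ 13 and n ≥ 13. If f is an optimal signed Roman dominating function on Cₘ ∨ Cₙ such that the restriction of f to Cₘ has closed-neighborhood sum at most −1 at some vertex x of Cₘ, then γ_sR(Cₘ ∨ Cₙ) ≥ 3. -/
open Finset SimpleGraph
open scoped Classical

lemma cycle_filter_card {n : ℕ} (hn : 13 ≤ n) (u : Fin n) :
    (Finset.univ.filter (fun y : Fin n => u = y ∨ (cycleGraph n).Adj y u)).card = 3 := by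
  obtain ⟨k, rfl⟩ : ∃ k, n = k + 2 := ⟨n - 2, by omega⟩
  have hset : (Finset.univ.filter (fun y : Fin (k+2) => u = y ∨ (cycleGraph (k+2)).Adj y u))
      = {u, u - 1, u + 1} := by
    ext y
    simp only [Finset.mem_filter, Finset.mem_univ, true_and, Finset.mem_insert,
      Finset.mem_singleton, cycleGraph_adj]
    constructor
    · rintro (h | h | h)
      · exact Or.inl h.symm
      · right; right; rw [sub_eq_iff_eq_add] at h; rw [h]; exact add_comm 1 u
      · right; left; rw [sub_eq_iff_eq_add] at h
        rw [h]; exact (add_sub_cancel_left 1 y).symm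
    · rintro (h | h | h)
      · exact Or.inl h.symm
      · right; right; rw [h]; exact sub_sub_cancel u 1
      · right; left; rw [h]; exact add_sub_cancel_left u 1
  rw [hset]
  have hone : ((1 : Fin (k+2)) : ℕ) = 1 := Fin.val_one _
  have hne2 : u ≠ u + 1 := by
    intro h
    have h10 : (1 : Fin (k+2)) = 0 := left_eq_add.mp h
    have := congrArg Fin.val h10
    rw [hone, Fin.val_zero] at this
    omega
  have hne1 : u ≠ u - 1 := by
    intro h
    exact hne2 (sub_eq_iff_eq_add.mp h.symm)
  have hne3 : u - 1 ≠ u + 1 := by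
    intro h
    have h' : u = u + (1 + 1) := by
      rw [← add_assoc]; exact sub_eq_iff_eq_add.mp h
    have h20 : (1 + 1 : Fin (k+2)) = 0 := left_eq_add.mp h'
    have := congrArg Fin.val h20
    rw [Fin.val_add, hone, Fin.val_zero, Nat.mod_eq_of_lt (by omega)] at this
    omega
  rw [Finset.card_insert_of_notMem (by simp [hne1, hne2]),
    Finset.card_insert_of_notMem (by simp [hne3]), Finset.card_singleton]

lemma sum_closedNbrSum_cycle {n : ℕ} (hn : 13 ≤ n) (g : Fin n → ℤ) :
    ∑ y, closedNbrSum (cycleGraph n) g y = 3 * ∑ b, g b := by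
  unfold closedNbrSum
  rw [Finset.sum_comm' (t' := (Finset.univ : Finset (Fin n)))
      (s' := fun u => Finset.univ.filter (fun y : Fin n => u = y ∨ (cycleGraph n).Adj y u))
      (fun y u => by simp [Finset.mem_filter]), Finset.mul_sum]
  refine Finset.sum_congr rfl fun u _ => ?_
  rw [Finset.sum_const, cycle_filter_card hn u]
  simp [mul_comm]

lemma join_closed_inl {m n : ℕ} (f : Fin m ⊕ Fin n → ℤ) (x : Fin m) :
    closedNbrSum (graphJoin (cycleGraph m) (cycleGraph n)) f (Sum.inl x)
      = closedNbrSum (cycleGraph m) (fun a => f (Sum.inl a)) x + ∑ b, f (Sum.inr b) := by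
  unfold closedNbrSum
  rw [Finset.sum_filter, Fintype.sum_sum_type]
  congr 1
  · rw [Finset.sum_filter]
    refine Finset.sum_congr rfl (fun a _ => ?_)
    congr 1
    simp [graphJoin, eq_comm, Sum.inl.injEq, adj_comm]
  · refine Finset.sum_congr rfl (fun b _ => ?_)
    simp [graphJoin]

lemma join_closed_inr {m n : ℕ} (f : Fin m ⊕ Fin n → ℤ) (y : Fin n) :
    closedNbrSum (graphJoin (cycleGraph m) (cycleGraph n)) f (Sum.inr y)
      = (∑ a, f (Sum.inl a)) + closedNbrSum (cycleGraph n) (fun b => f (Sum.inr b)) y := by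
  unfold closedNbrSum
  rw [Finset.sum_filter, Fintype.sum_sum_type]
  congr 1
  · refine Finset.sum_congr rfl (fun a _ => ?_)
    simp [graphJoin]
  · rw [Finset.sum_filter]
    refine Finset.sum_congr rfl (fun b _ => ?_)
    congr 1
    simp [graphJoin, eq_comm, Sum.inl.injEq, adj_comm]

theorem stmt16 (m n : ℕ) (hm : 13 ≤ m) (hn : 13 ≤ n)
    (f : Fin m ⊕ Fin n → ℤ)
    (hf : IsSRDF (graphJoin (cycleGraph m) (cycleGraph n)) f)
    (hopt : ∑ v, f v = gammaSR (graphJoin (cycleGraph m) (cycleGraph n)))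
    (x : Fin m) (hx : closedNbrSum (cycleGraph m) (fun a => f (Sum.inl a)) x ≤ -1) :
    3 ≤ gammaSR (graphJoin (cycleGraph m) (cycleGraph n)) := by
  obtain ⟨hvals, hge1, hroman⟩ := hf
  set Sm := ∑ a, f (Sum.inl a) with hSm
  set Sn := ∑ b, f (Sum.inr b) with hSn
  -- step 1: Sn ≥ 2
  have h1 := hge1 (Sum.inl x)
  rw [join_closed_inl] at h1
  have hSn2 : 2 ≤ Sn := by omega
  -- step 2: sum over all y in the second cycle
  have h2 : ∀ y : Fin n, 1 ≤ Sm + closedNbrSum (cycleGraph n) (fun b => f (Sum.inr b)) y := by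
    intro y
    have := hge1 (Sum.inr y)
    rwa [join_closed_inr] at this
  have h3 : (n : ℤ) ≤ n * Sm + 3 * Sn := by
    have := Finset.sum_le_sum (s := (Finset.univ : Finset (Fin n)))
      (f := fun _ => (1 : ℤ))
      (g := fun y => Sm + closedNbrSum (cycleGraph n) (fun b => f (Sum.inr b)) y)
      (fun y _ => h2 y)
    rw [Finset.sum_const, Finset.sum_add_distrib, Finset.sum_const,
      sum_closedNbrSum_cycle hn] at this
    simpa using this
  have hn13 : (13 : ℤ) ≤ n := by exact_mod_cast hn
  have htot : 3 ≤ Sm + Sn := by nlinarith [hSn2, h3, hn13]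
  rw [← hopt, Fintype.sum_sum_type]
  exact htot
end
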